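/- Let H = (V, E_0) be a cycle on n = q^{g+1} vertices (q ≥ 3, g ≥ 3), and let A be a set of q-hyperedges on V such that no vertex is incident with more than one hyperedge of A and the hypergraph (V, E_0 ∪ A) has girth at least g. If |A| < q^g, then there exists a set A⁺ of q-hyperedges with |A⁺| = |A| + 1 satisfying the same two conditions. -/

import Mathlib

def HamCycAdj (n : ℕ) (a b : Fin n) : Prop :=
  (a.val + 1) % n = b.val ∨ (b.val + 1) % n = a.val

def HyperAdj {n : ℕ} (A : Finset (Finset (Fin n))) (a b : Fin n) : Prop :=
  a ≠ b ∧ ∃ e ∈ A, a ∈ e ∧ b ∈ e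

def IsCycleWalk {n : ℕ} (A : Finset (Finset (Fin n))) (L : ℕ)
    (w : ZMod L → Fin n) (t : ZMod L → Bool) : Prop :=
  0 < L
  ∧ (∀ i : ZMod L, (t i = true → HamCycAdj n (w i) (w (i + 1)))
      ∧ (t i = false → HyperAdj A (w i) (w (i + 1))))
  ∧ (∀ i : ZMod L, ¬(t i = false ∧ t (i + 1) = false))
  ∧ (∀ i : ZMod L, ¬(t i = true ∧ t (i + 1) = true ∧ w (i + 2) = w i))

namespace Stmt13

variable {n : ℕ}

/-- One step of a walk: `b = true` is a Hamilton-cycle step, `b = false` a hyperedge step. -/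
def StepOK (A : Finset (Finset (Fin n))) (b : Bool) (x y : Fin n) : Prop :=
  if b then HamCycAdj n x y else HyperAdj A x y

/-- Validity of two consecutive steps. -/
def Valid2 (s₁ s₂ : Bool) (x z : Fin n) : Prop :=
  ¬(s₁ = false ∧ s₂ = false) ∧ ¬(s₁ = true ∧ s₂ = true ∧ z = x)

/-- An internally valid walk of length `k` (indices beyond the range are irrelevant). -/
def IsChain (A : Finset (Finset (Fin n))) (k : ℕ) (v : ℕ → Fin n) (s : ℕ → Bool) : Prop :=
  (∀ i, i < k → StepOK A (s i) (v i) (v (i + 1)))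
  ∧ (∀ i, i + 2 ≤ k → Valid2 (s i) (s (i + 1)) (v i) (v (i + 2)))

theorem stepOK_mono {A B : Finset (Finset (Fin n))} (h : A ⊆ B) {b x y} :
    StepOK A b x y → StepOK B b x y := by
  cases b with
  | true => exact fun h => h
  | false => rintro ⟨hxy, e, he, hx, hy⟩; exact ⟨hxy, e, h he, hx, hy⟩

theorem isChain_mono {A B : Finset (Finset (Fin n))} (h : A ⊆ B) {k v s} :
    IsChain A k v s → IsChain B k v s := by
  rintro ⟨h1, h2⟩
  exact ⟨fun i hi => stepOK_mono h (h1 i hi), h2⟩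

theorem hamCycAdj_irrefl (hn : 2 ≤ n) (x : Fin n) : ¬ HamCycAdj n x x := by
  have hx := x.isLt
  rintro (h | h) <;>
  · rcases Nat.lt_or_ge (x.val + 1) n with h2 | h2
    · rw [Nat.mod_eq_of_lt h2] at h; omega
    · have : x.val + 1 = n := by omega
      rw [this, Nat.mod_self] at h
      omega

theorem stepOK_ne {A : Finset (Finset (Fin n))} (hn : 2 ≤ n) {b x y} (h : StepOK A b x y) :
    x ≠ y := by
  cases b with
  | false => exact h.1
  | true => rintro rfl; exact hamCycAdj_irrefl hn x h

theorem hamCycAdj_symm {x y : Fin n} (h : HamCycAdj n x y) : HamCycAdj n y x := h.symm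

theorem hyperAdj_symm {A : Finset (Finset (Fin n))} {x y : Fin n} (h : HyperAdj A x y) :
    HyperAdj A y x := by
  obtain ⟨hne, e, he, hx, hy⟩ := h
  exact ⟨hne.symm, e, he, hy, hx⟩

theorem stepOK_symm {A : Finset (Finset (Fin n))} {b x y} (h : StepOK A b x y) :
    StepOK A b y x := by
  cases b with
  | false => exact hyperAdj_symm h
  | true => exact hamCycAdj_symm h

theorem valid2_swap {s₁ s₂ : Bool} {x z : Fin n} (h : Valid2 s₁ s₂ x z) :
    Valid2 s₂ s₁ z x :=
  ⟨fun ⟨a, b⟩ => h.1 ⟨b, a⟩, fun ⟨a, b, c⟩ => h.2 ⟨b, a, c.symm⟩⟩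

/-- Reversal of a chain. -/
theorem isChain_reverse {A : Finset (Finset (Fin n))} {k v s} (hc : IsChain A k v s) :
    IsChain A k (fun i => v (k - i)) (fun i => s (k - 1 - i)) := by
  obtain ⟨h1, h2⟩ := hc
  constructor
  · intro i hi
    show StepOK A (s (k - 1 - i)) (v (k - i)) (v (k - (i + 1)))
    have e1 : k - 1 - i = k - i - 1 := by omega
    have e2 : k - (i + 1) = k - i - 1 := by omega
    have e3 : k - i = k - i - 1 + 1 := by omega
    rw [e1, e2, e3]
    exact stepOK_symm (h1 (k - i - 1) (by omega))
  · intro i hi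
    show Valid2 (s (k - 1 - i)) (s (k - 1 - (i + 1))) (v (k - i)) (v (k - (i + 2)))
    have hj : (k - i - 2) + 2 ≤ k := by omega
    have e1 : k - 1 - i = (k - i - 2) + 1 := by omega
    have e2 : k - 1 - (i + 1) = k - i - 2 := by omega
    have e3 : k - (i + 2) = k - i - 2 := by omega
    have e4 : k - i = (k - i - 2) + 2 := by omega
    rw [e1, e2, e3, e4]
    exact valid2_swap (h2 (k - i - 2) hj)

/-- Bridge: a closed chain whose wrap-around pairs are also valid is a cycle walk. -/
theorem isCycleWalk_of_chain {A : Finset (Finset (Fin n))} {k : ℕ} (hk : 2 ≤ k)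
    {v : ℕ → Fin n} {s : ℕ → Bool}
    (hc : IsChain A k v s) (hcl : v k = v 0)
    (hw1 : ¬(s (k - 1) = false ∧ s 0 = false))
    (hw2 : ¬(s (k - 1) = true ∧ s 0 = true ∧ v 1 = v (k - 1))) :
    IsCycleWalk A k (fun i => v i.val) (fun i => s i.val) := by
  haveI : NeZero k := ⟨by omega⟩
  obtain ⟨h1, h2⟩ := hc
  have hval : ∀ i : ZMod k, (i + 1).val = (i.val + 1) % k := by
    intro i
    rw [ZMod.val_add, ZMod.val_one_eq_one_mod, Nat.add_mod_mod]
  have hvlt : ∀ i : ZMod k, i.val < k := fun i => ZMod.val_lt i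
  have hv1 : ∀ i : ZMod k, v ((i + 1).val) = v (i.val + 1) := by
    intro i
    rw [hval i]
    rcases Nat.lt_or_ge (i.val + 1) k with h | h
    · rw [Nat.mod_eq_of_lt h]
    · have hik : i.val + 1 = k := by have := hvlt i; omega
      rw [hik, Nat.mod_self, hcl]
  refine ⟨by omega, ?_, ?_, ?_⟩
  · intro i
    have hstep := h1 i.val (hvlt i)
    constructor
    · intro ht
      show HamCycAdj n (v i.val) (v ((i + 1).val))
      rw [hv1 i]
      have ht' : s i.val = true := ht
      rw [ht'] at hstep
      exact hstep
    · intro ht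
      show HyperAdj A (v i.val) (v ((i + 1).val))
      rw [hv1 i]
      have ht' : s i.val = false := ht
      rw [ht'] at hstep
      exact hstep
  · intro i
    show ¬(s i.val = false ∧ s ((i + 1).val) = false)
    rw [hval i]
    rcases Nat.lt_or_ge (i.val + 1) k with h | h
    · rw [Nat.mod_eq_of_lt h]
      exact (h2 i.val (by omega)).1
    · have hik : i.val = k - 1 := by have := hvlt i; omega
      have h0 : (i.val + 1) % k = 0 := by
        have : i.val + 1 = k := by omega
        rw [this, Nat.mod_self]
      rw [h0, hik]
      exact hw1
  · intro i
    show ¬(s i.val = true ∧ s ((i + 1).val) = true ∧ v ((i + 2).val) = v i.val)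
    have hval2 : (i + 2).val = (i.val + 2) % k := by
      rw [show (i + 2 : ZMod k) = i + 1 + 1 by ring, hval (i + 1), hval i, Nat.mod_add_mod]
    rw [hval i, hval2]
    rcases Nat.lt_or_ge (i.val + 2) k with h | h
    · rw [Nat.mod_eq_of_lt (by omega : i.val + 1 < k), Nat.mod_eq_of_lt h]
      exact (h2 i.val (by omega)).2
    · rcases Nat.eq_or_lt_of_le h with h' | h'
      · rw [Nat.mod_eq_of_lt (by omega : i.val + 1 < k)]
        have e0 : (i.val + 2) % k = 0 := by rw [h'.symm, Nat.mod_self]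
        rw [e0]
        have := (h2 i.val (by omega)).2
        rw [show v (i.val + 2) = v 0 by rw [h'.symm, hcl]] at this
        exact this
      · have hik : i.val = k - 1 := by have := hvlt i; omega
        have e1 : (i.val + 1) % k = 0 := by
          have h3 : i.val + 1 = k := by omega
          rw [h3, Nat.mod_self]
        have e2 : (i.val + 2) % k = 1 := by
          have h3 : i.val + 2 = k + 1 := by omega
          rw [h3, Nat.add_mod_left, Nat.mod_eq_of_lt hk]
        rw [e1, e2, hik]
        exact hw2

@[simp] theorem stepOK_false_iff {A : Finset (Finset (Fin n))} {x y} :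
    StepOK A false x y ↔ HyperAdj A x y := by simp [StepOK]

@[simp] theorem stepOK_true_iff {A : Finset (Finset (Fin n))} {x y} :
    StepOK A true x y ↔ HamCycAdj n x y := by simp [StepOK]

/-- Master lemma: any closed internally valid chain (with no condition at the wrap-around)
in a matching hypergraph of girth at least `g` has length at least `g`, provided `3 ≤ g`. -/
theorem closed_chain_long {g : ℕ} {A : Finset (Finset (Fin n))} (hn : 2 ≤ n) (hg : 3 ≤ g)
    (hmatch : ∀ e ∈ A, ∀ f ∈ A, e ≠ f → Disjoint e f)
    (hgirth : ∀ (L : ℕ) (w : ZMod L → Fin n) (t : ZMod L → Bool),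
      IsCycleWalk A L w t → g ≤ L) :
    ∀ k, 0 < k → ∀ (v : ℕ → Fin n) (s : ℕ → Bool), IsChain A k v s → v k = v 0 → g ≤ k := by
  intro k
  induction k using Nat.strong_induction_on with
  | _ k ih =>
    intro hk v s hc hcl
    obtain ⟨h1, h2⟩ := hc
    -- length 1 is impossible
    rcases Nat.eq_or_lt_of_le hk with h1k | h1k
    · subst h1k
      exact absurd hcl.symm (stepOK_ne hn (h1 0 (by omega)))
    -- length 2
    rcases Nat.eq_or_lt_of_le h1k with h2k | h2k
    · subst h2k
      have h2' := h2 0 (by omega)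
      match hs0 : s 0, hs1 : s 1 with
      | true, true =>
        exfalso
        rw [hs0, hs1] at h2'
        exact h2'.2 ⟨rfl, rfl, hcl⟩
      | false, false =>
        exfalso
        rw [hs0, hs1] at h2'
        exact h2'.1 ⟨rfl, rfl⟩
      | true, false =>
        exact hgirth 2 _ _ (isCycleWalk_of_chain (by omega) ⟨h1, h2⟩ hcl
          (by simp [hs0, hs1]) (by simp [hs0, hs1]))
      | false, true =>
        exact hgirth 2 _ _ (isCycleWalk_of_chain (by omega) ⟨h1, h2⟩ hcl
          (by simp [hs0, hs1]) (by simp [hs0, hs1]))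
    -- now 3 ≤ k
    have hk3 : 3 ≤ k := h2k
    by_cases hw1 : s (k - 1) = false ∧ s 0 = false
    · -- two hyperedge steps at the wrap; they use the same edge
      have hstep1 := h1 (k - 1) (by omega)
      have hstep0 := h1 0 (by omega)
      rw [hw1.1] at hstep1
      rw [hw1.2] at hstep0
      rw [stepOK_false_iff] at hstep1 hstep0
      obtain ⟨hne1, e, he, hek1, hek0⟩ := hstep1
      obtain ⟨hne0, f, hf, hf0, hf1⟩ := hstep0
      rw [show k - 1 + 1 = k by omega, hcl] at hek0
      have hef : e = f := by
        by_contra hef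
        exact (Finset.disjoint_left.mp (hmatch e he f hf hef)) hek0 hf0
      subst hef
      by_cases hvv : v 1 = v (k - 1)
      · -- drop both steps
        have := ih (k - 2) (by omega) (by omega) (fun i => v (i + 1)) (fun i => s (i + 1))
          ⟨fun i hi => h1 (i + 1) (by omega), fun i hi => h2 (i + 1) (by omega)⟩
          (by show v (k - 2 + 1) = v 1; rw [show k - 2 + 1 = k - 1 by omega]; exact hvv.symm)
        omega
      · -- merge the two steps into one
        set v' : ℕ → Fin n := fun i => if i ≤ k - 2 then v (i + 1) else v 1 with hv'
        set s' : ℕ → Bool := fun i => if i + 2 ≤ k - 1 then s (i + 1) else false with hs'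
        have hchain : IsChain A (k - 1) v' s' := by
          constructor
          · intro i hi
            by_cases hik : i + 2 ≤ k - 1
            · have e1 : v' i = v (i + 1) := if_pos (by omega)
              have e2 : v' (i + 1) = v (i + 2) := if_pos (by omega)
              have e3 : s' i = s (i + 1) := if_pos hik
              rw [e1, e2, e3]
              exact h1 (i + 1) (by omega)
            · -- the merged step: i = k - 2
              have hik' : i = k - 2 := by omega
              have e1 : v' i = v (k - 1) := by
                rw [hv']; simp only [hik', if_pos (le_refl _)]
                congr 1; omega
              have e2 : v' (i + 1) = v 1 := by
                rw [hv']; simp only []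
                rw [if_neg (by omega)]
              have e3 : s' i = false := by rw [hs']; simp only []; rw [if_neg (by omega)]
              rw [e1, e2, e3, stepOK_false_iff]
              exact ⟨fun h => hvv h.symm, e, he, hek1, hf1⟩
          · intro i hi
            by_cases hik : i + 3 ≤ k - 1
            · have e3 : s' i = s (i + 1) := if_pos (by omega)
              have e4 : s' (i + 1) = s (i + 2) := if_pos (by omega)
              have e1 : v' i = v (i + 1) := if_pos (by omega)
              have e2 : v' (i + 2) = v (i + 3) := if_pos (by omega)
              rw [e1, e2, e3, e4]
              exact h2 (i + 1) (by omega)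
            · -- i = k - 3 : pair (old step k-2, merged hyperedge step)
              have hik' : i = k - 3 := by omega
              have e3 : s' i = s (k - 2) := by
                rw [hs', hik']; simp only []
                rw [if_pos (by omega)]; congr 1; omega
              have e4 : s' (i + 1) = false := by
                rw [hs']; simp only []; rw [if_neg (by omega)]
              have hs2 : s (k - 2) = true := by
                have := (h2 (k - 2) (by omega)).1
                rw [show k - 2 + 1 = k - 1 by omega] at this
                rcases Bool.eq_false_or_eq_true (s (k - 2)) with h | h
                · exact h
                · exact absurd ⟨h, hw1.1⟩ this
              rw [e3, e4, hs2]
              exact ⟨fun h => by simp at h, fun h => by simp at h⟩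
        have hcl' : v' (k - 1) = v' 0 := by
          have e1 : v' (k - 1) = v 1 := by rw [hv']; simp only []; rw [if_neg (by omega)]
          have e2 : v' 0 = v 1 := by rw [hv']; simp only []; rw [if_pos (by omega)]
          rw [e1, e2]
        have := ih (k - 1) (by omega) (by omega) v' s' hchain hcl'
        omega
    · by_cases hw2 : s (k - 1) = true ∧ s 0 = true ∧ v 1 = v (k - 1)
      · -- U-turn at the wrap: drop the first and last steps
        have := ih (k - 2) (by omega) (by omega) (fun i => v (i + 1)) (fun i => s (i + 1))
          ⟨fun i hi => h1 (i + 1) (by omega), fun i hi => h2 (i + 1) (by omega)⟩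
          (by show v (k - 2 + 1) = v 1; rw [show k - 2 + 1 = k - 1 by omega]; exact hw2.2.2.symm)
        omega
      · exact hgirth k _ _ (isCycleWalk_of_chain (by omega) ⟨h1, h2⟩ hcl hw1 hw2)

/-- Reachability by an internally valid chain of length at most `d`. -/
def ReachC (A : Finset (Finset (Fin n))) (d : ℕ) (x y : Fin n) : Prop :=
  ∃ k, k ≤ d ∧ ∃ v s, IsChain A k v s ∧ v 0 = x ∧ v k = y

theorem reachC_symm {A : Finset (Finset (Fin n))} {d x y} (h : ReachC A d x y) :
    ReachC A d y x := by
  obtain ⟨k, hk, v, s, hc, h0, h1⟩ := h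
  exact ⟨k, hk, _, _, isChain_reverse hc, by simpa using h1, by simpa using h0⟩

theorem isCycleWalk_mono {A B : Finset (Finset (Fin n))} (h : A ⊆ B) {L w t}
    (hW : IsCycleWalk A L w t) : IsCycleWalk B L w t := by
  obtain ⟨h0, h1, h2, h3⟩ := hW
  refine ⟨h0, fun i => ⟨(h1 i).1, fun ht => ?_⟩, h2, h3⟩
  obtain ⟨hne, e, he, hx, hy⟩ := (h1 i).2 ht
  exact ⟨hne, e, h he, hx, hy⟩

/-- A step of a cycle walk that is a hyperedge step via one of the `New` edges. -/
def IsStarStep (New : Finset (Finset (Fin n))) {L : ℕ} (w : ZMod L → Fin n)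
    (t : ZMod L → Bool) (i : ZMod L) : Prop :=
  t i = false ∧ ∃ E ∈ New, w i ∈ E ∧ w (i + 1) ∈ E

/-- Key girth-preservation lemma: replacing the edges of `F ⊆ A` by new edges `New`, where
all pairs of vertices of new edges are far apart in `A`, or lie in a common edge of `F`,
or are both `soft` (with at most one soft vertex per new edge), keeps the girth at least `g`. -/
theorem girth_of_modified {g : ℕ} {A F New : Finset (Finset (Fin n))} {soft : Finset (Fin n)}
    (hn : 2 ≤ n) (hg : 3 ≤ g) (hFA : F ⊆ A)
    (hmatch : ∀ e ∈ A, ∀ f ∈ A, e ≠ f → Disjoint e f)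
    (hgirth : ∀ (L : ℕ) (w : ZMod L → Fin n) (t : ZMod L → Bool),
      IsCycleWalk A L w t → g ≤ L)
    (hfar : ∀ x y : Fin n, (∃ E ∈ New, x ∈ E) → (∃ E ∈ New, y ∈ E) → x ≠ y →
      ¬(x ∈ soft ∧ y ∈ soft) →
      (¬ ReachC A (g - 2) x y) ∨ (∃ f ∈ F, x ∈ f ∧ y ∈ f))
    (hone : ∀ E ∈ New, ∀ x ∈ E, ∀ y ∈ E, x ∈ soft → y ∈ soft → x = y) :
    ∀ (L : ℕ) (w : ZMod L → Fin n) (t : ZMod L → Bool),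
      IsCycleWalk ((A \ F) ∪ New) L w t → g ≤ L := by
  intro L w t hW
  by_contra hgl
  push_neg at hgl
  obtain ⟨hL0, hstep, hc3, hc4⟩ := hW
  haveI : NeZero L := ⟨hL0.ne'⟩
  classical
  -- non-star hyperedge steps use edges of A \ F
  have step_nonstar : ∀ i : ZMod L, ¬ IsStarStep New w t i →
      StepOK (A \ F) (t i) (w i) (w (i + 1)) := by
    intro i hns
    rcases Bool.eq_false_or_eq_true (t i) with ht | ht
    · rw [ht, stepOK_true_iff]
      exact (hstep i).1 ht
    · rw [ht, stepOK_false_iff]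
      obtain ⟨hne, e, he, hx, hy⟩ := (hstep i).2 ht
      rcases Finset.mem_union.mp he with he' | he'
      · exact ⟨hne, e, he', hx, hy⟩
      · exact absurd ⟨ht, e, he', hx, hy⟩ hns
  by_cases hex : ∃ i, IsStarStep New w t i
  · -- analysis of the segment after a star step
    have seg : ∀ i0 : ZMod L, IsStarStep New w t i0 →
        w (i0 + 1) ∈ soft ∧ ∃ j, IsStarStep New w t j ∧ w j ∈ soft := by
      intro i0 hi0
      have hL1 : ((L - 1 + 1 : ℕ) : ZMod L) = 0 := by
        rw [Nat.sub_add_cancel (by omega : 1 ≤ L)]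
        exact ZMod.natCast_self L
      have hPex : ∃ d : ℕ, IsStarStep New w t (i0 + ((d + 1 : ℕ) : ZMod L)) :=
        ⟨L - 1, by rw [hL1, add_zero]; exact hi0⟩
      set d0 := Nat.find hPex with hd0
      set m := d0 + 1 with hm
      have hstarm : IsStarStep New w t (i0 + (m : ℕ)) := Nat.find_spec hPex
      have hmin : ∀ j : ℕ, 1 ≤ j → j < m → ¬ IsStarStep New w t (i0 + (j : ℕ)) := by
        intro j hj1 hjm
        have := Nat.find_min hPex (m := j - 1) (by omega)
        rwa [show j - 1 + 1 = j by omega] at this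
      have hmL : m ≤ L := by
        have : d0 ≤ L - 1 := Nat.find_le (by rw [hL1, add_zero]; exact hi0)
        omega
      -- m = 1 is impossible: two consecutive hyperedge steps
      rcases Nat.eq_or_lt_of_le (by omega : 1 ≤ m) with hm1 | hm2
      · exfalso
        have h1 : IsStarStep New w t (i0 + ((1 : ℕ) : ZMod L)) := by
          rw [hm1]; exact hstarm
        rw [Nat.cast_one] at h1
        exact hc3 i0 ⟨hi0.1, h1.1⟩
      -- the chain along the segment
      set v : ℕ → Fin n := fun j => w (i0 + ((j + 1 : ℕ) : ZMod L)) with hv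
      set s : ℕ → Bool := fun j => t (i0 + ((j + 1 : ℕ) : ZMod L)) with hs
      have hchain : IsChain (A \ F) (m - 1) v s := by
        constructor
        · intro j hj
          have hns := hmin (j + 1) (by omega) (by omega)
          have hok := step_nonstar _ hns
          show StepOK (A \ F) (t (i0 + ((j + 1 : ℕ) : ZMod L)))
            (w (i0 + ((j + 1 : ℕ) : ZMod L))) (w (i0 + ((j + 1 + 1 : ℕ) : ZMod L)))
          have e : ((j + 1 + 1 : ℕ) : ZMod L) = ((j + 1 : ℕ) : ZMod L) + 1 := by
            push_cast; ring
          rw [e, ← add_assoc]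
          exact hok
        · intro j hj
          show Valid2 (t (i0 + ((j + 1 : ℕ) : ZMod L))) (t (i0 + ((j + 1 + 1 : ℕ) : ZMod L)))
            (w (i0 + ((j + 1 : ℕ) : ZMod L))) (w (i0 + ((j + 2 + 1 : ℕ) : ZMod L)))
          have e1 : ((j + 1 + 1 : ℕ) : ZMod L) = ((j + 1 : ℕ) : ZMod L) + 1 := by
            push_cast; ring
          have e2 : ((j + 2 + 1 : ℕ) : ZMod L) = ((j + 1 : ℕ) : ZMod L) + 2 := by
            push_cast; ring
          rw [e1, e2, ← add_assoc, ← add_assoc]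
          exact ⟨hc3 _, hc4 _⟩
      set a := w (i0 + 1) with ha
      set b := w (i0 + ((m : ℕ) : ZMod L)) with hb
      have hv0 : v 0 = a := by
        show w (i0 + ((0 + 1 : ℕ) : ZMod L)) = a
        norm_num
        rfl
      have hvm : v (m - 1) = b := by
        show w (i0 + ((m - 1 + 1 : ℕ) : ZMod L)) = b
        rw [show m - 1 + 1 = m by omega]
      by_cases hab : a = b
      · -- closed segment: contradiction with the master lemma
        exfalso
        have := closed_chain_long hn hg hmatch hgirth (m - 1) (by omega) v s
          (isChain_mono Finset.sdiff_subset hchain)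
          (by rw [hvm, hv0]; exact hab.symm)
        omega
      · have hamem : ∃ E ∈ New, a ∈ E := by
          obtain ⟨-, E, hE, -, h2⟩ := hi0
          exact ⟨E, hE, h2⟩
        have hbmem : ∃ E ∈ New, b ∈ E := by
          obtain ⟨-, E, hE, h1, -⟩ := hstarm
          exact ⟨E, hE, h1⟩
        by_cases hsoft : a ∈ soft ∧ b ∈ soft
        · exact ⟨hsoft.1, i0 + ((m : ℕ) : ZMod L), hstarm, hsoft.2⟩
        · exfalso
          rcases hfar a b hamem hbmem hab hsoft with hfar' | ⟨f, hf, haf, hbf⟩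
          · exact hfar' ⟨m - 1, by omega, v, s,
              isChain_mono Finset.sdiff_subset hchain, hv0, hvm⟩
          · -- close up the chain through the edge f ∈ F ⊆ A
            set v' : ℕ → Fin n := fun j => if j ≤ m - 1 then v j else a with hv'
            set s' : ℕ → Bool := fun j => if j ≤ m - 2 then s j else false with hs'
            have hsm2 : s (m - 2) = true := by
              have hns : t (i0 + ((m : ℕ) : ZMod L)) = false := hstarm.1
              have h3 := hc3 (i0 + ((m - 1 : ℕ) : ZMod L))
              have ecast : (i0 + ((m - 1 : ℕ) : ZMod L)) + 1 = i0 + ((m : ℕ) : ZMod L) := by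
                rw [add_assoc]
                congr 1
                rw [show (m : ℕ) = (m - 1) + 1 by omega]
                push_cast
                ring
              rw [ecast] at h3
              show t (i0 + ((m - 2 + 1 : ℕ) : ZMod L)) = true
              rw [show m - 2 + 1 = m - 1 by omega]
              rcases Bool.eq_false_or_eq_true (t (i0 + ((m - 1 : ℕ) : ZMod L))) with h | h
              · exact h
              · exact absurd ⟨h, hns⟩ h3
            have hchain' : IsChain A m v' s' := by
              constructor
              · intro j hj
                rcases Nat.lt_or_ge j (m - 1) with hjm | hjm
                · have e1 : v' j = v j := if_pos (by omega)
                  have e2 : v' (j + 1) = v (j + 1) := if_pos (by omega)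
                  have e3 : s' j = s j := if_pos (by omega)
                  rw [e1, e2, e3]
                  exact stepOK_mono Finset.sdiff_subset (hchain.1 j hjm)
                · have e1 : v' j = b := by
                    rw [hv']; simp only []
                    rw [if_pos (by omega : j ≤ m - 1), show j = m - 1 by omega, hvm]
                  have e2 : v' (j + 1) = a := by rw [hv']; simp only []; rw [if_neg (by omega)]
                  have e3 : s' j = false := by rw [hs']; simp only []; rw [if_neg (by omega)]
                  rw [e1, e2, e3, stepOK_false_iff]
                  exact ⟨fun h => hab h.symm, f, hFA hf, hbf, haf⟩
              · intro j hj
                rcases Nat.lt_or_ge (j + 2) m with hjm | hjm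
                · have e1 : v' j = v j := if_pos (by omega)
                  have e2 : v' (j + 2) = v (j + 2) := if_pos (by omega)
                  have e3 : s' j = s j := if_pos (by omega)
                  have e4 : s' (j + 1) = s (j + 1) := if_pos (by omega)
                  rw [e1, e2, e3, e4]
                  exact hchain.2 j (by omega)
                · have e3 : s' j = s (m - 2) := by
                    rw [hs']; simp only []
                    rw [if_pos (by omega : j ≤ m - 2), show j = m - 2 by omega]
                  have e4 : s' (j + 1) = false := by rw [hs']; simp only []; rw [if_neg (by omega)]
                  rw [e3, e4, hsm2]
                  exact ⟨fun h => by simp at h, fun h => by simp at h⟩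
            have hcl' : v' m = v' 0 := by
              have e1 : v' m = a := by rw [hv']; simp only []; rw [if_neg (by omega)]
              have e2 : v' 0 = a := by
                rw [hv']; simp only []; rw [if_pos (by omega)]; exact hv0
              rw [e1, e2]
            have := closed_chain_long hn hg hmatch hgirth m (by omega) v' s' hchain' hcl'
            omega
    -- combine: some star step has both endpoints soft, contradicting `hone`
    obtain ⟨i0, hi0⟩ := hex
    obtain ⟨-, j, hj, hjs⟩ := seg i0 hi0
    obtain ⟨hjs1, -⟩ := seg j hj
    obtain ⟨htj, E, hE, hwj, hwj1⟩ := hj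
    have hne : w j ≠ w (j + 1) := ((hstep j).2 htj).1
    exact hne (hone E hE _ hwj _ hwj1 hjs hjs1)
  · -- no star step: the walk lives in A \ F ⊆ A
    push_neg at hex
    have : IsCycleWalk A L w t := by
      refine ⟨hL0, fun i => ⟨(hstep i).1, fun ht => ?_⟩, hc3, hc4⟩
      have := step_nonstar i (hex i)
      rw [ht, stepOK_false_iff] at this
      obtain ⟨hne, e, he, hx, hy⟩ := this
      exact ⟨hne, e, Finset.mem_sdiff.mp he |>.1, hx, hy⟩
    exact hgl.not_ge (hgirth L w t this)

section Counting

open Classical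

variable {A : Finset (Finset (Fin n))}

/-- Endpoint of a walk (steps are stored most recent first). -/
def epoint (x : Fin n) : List (Fin n × Bool) → Fin n
  | [] => x
  | (p :: _) => p.1

/-- A valid extension of a walk by one step. -/
def ExtOK (A : Finset (Finset (Fin n))) (x : Fin n) (l : List (Fin n × Bool))
    (st : Fin n × Bool) : Prop :=
  StepOK A st.2 (epoint x l) st.1 ∧
  (∀ p rest, l = p :: rest → Valid2 p.2 st.2 (epoint x rest) st.1)

/-- The finset of internally valid walks of length `ℓ` starting at `x`. -/
noncomputable def WSet (A : Finset (Finset (Fin n))) (x : Fin n) : ℕ → Finset (List (Fin n × Bool))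
  | 0 => {[]}
  | (ℓ+1) => (WSet A x ℓ).biUnion (fun l =>
      (Finset.univ.filter (fun st => ExtOK A x l st)).image (fun st => st :: l))

theorem mem_WSet_succ {x : Fin n} {ℓ : ℕ} {l' : List (Fin n × Bool)} :
    l' ∈ WSet A x (ℓ+1) ↔ ∃ l ∈ WSet A x ℓ, ∃ st, ExtOK A x l st ∧ l' = st :: l := by
  simp only [WSet, Finset.mem_biUnion, Finset.mem_image, Finset.mem_filter, Finset.mem_univ,
    true_and]
  constructor
  · rintro ⟨l, hl, st, hst, rfl⟩
    exact ⟨l, hl, st, hst, rfl⟩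
  · rintro ⟨l, hl, st, hst, rfl⟩
    exact ⟨l, hl, st, hst, rfl⟩

theorem WSet_length {x : Fin n} : ∀ {ℓ : ℕ} {l : List (Fin n × Bool)},
    l ∈ WSet A x ℓ → l.length = ℓ := by
  intro ℓ
  induction ℓ with
  | zero => intro l hl; simp [WSet] at hl; simp [hl]
  | succ ℓ ih =>
    intro l hl
    obtain ⟨l₀, hl₀, st, hst, rfl⟩ := mem_WSet_succ.mp hl
    simp [ih hl₀]

/-- Walks ending with a Hamiltonian step. -/
noncomputable def WH (A : Finset (Finset (Fin n))) (x : Fin n) (ℓ : ℕ) :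
    Finset (List (Fin n × Bool)) :=
  (WSet A x ℓ).filter (fun l => ∃ p rest, l = p :: rest ∧ p.2 = true)

/-- Walks ending with a hyperedge step. -/
noncomputable def WF (A : Finset (Finset (Fin n))) (x : Fin n) (ℓ : ℕ) :
    Finset (List (Fin n × Bool)) :=
  (WSet A x ℓ).filter (fun l => ∃ p rest, l = p :: rest ∧ p.2 = false)

theorem WSet_subset_WH_union_WF {x : Fin n} {ℓ : ℕ} (hl : 1 ≤ ℓ) :
    WSet A x ℓ ⊆ WH A x ℓ ∪ WF A x ℓ := by
  intro l hl'
  rcases hli : l with - | ⟨p, rest⟩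
  · have := WSet_length hl'
    simp [hli] at this
    omega
  · subst hli
    rcases Bool.eq_false_or_eq_true p.2 with h | h
    · exact Finset.mem_union_left _ (Finset.mem_filter.mpr ⟨hl', p, rest, rfl, h⟩)
    · exact Finset.mem_union_right _ (Finset.mem_filter.mpr ⟨hl', p, rest, rfl, h⟩)

/-- the two Hamiltonian neighbours of `z`. -/
def hamNbrs (hn : 2 ≤ n) (z : Fin n) : Finset (Fin n) :=
  {⟨(z.val + 1) % n, Nat.mod_lt _ (by omega)⟩, ⟨(z.val + (n - 1)) % n, Nat.mod_lt _ (by omega)⟩}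

theorem mem_hamNbrs (hn : 2 ≤ n) {z y : Fin n} (h : HamCycAdj n z y) : y ∈ hamNbrs hn z := by
  simp only [hamNbrs, Finset.mem_insert, Finset.mem_singleton]
  rcases h with h | h
  · left
    exact Fin.ext h.symm
  · right
    apply Fin.ext
    show y.val = (z.val + (n - 1)) % n
    have hy := y.isLt
    have hz := z.isLt
    rcases Nat.lt_or_ge (y.val + 1) n with h2 | h2
    · rw [Nat.mod_eq_of_lt h2] at h
      rw [← h, show y.val + 1 + (n - 1) = y.val + n by omega, Nat.add_mod_right,
        Nat.mod_eq_of_lt hy]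
    · have h3 : y.val + 1 = n := by omega
      rw [h3, Nat.mod_self] at h
      rw [← h, Nat.zero_add, Nat.mod_eq_of_lt (by omega : n - 1 < n)]
      omega

theorem card_hamNbrs (hn : 2 ≤ n) (z : Fin n) : (hamNbrs hn z).card ≤ 2 := by
  apply le_trans (Finset.card_insert_le _ _)
  simp

theorem hamCycAdj_prev (hn : 2 ≤ n) {z y : Fin n} (h : HamCycAdj n z y) :
    HamCycAdj n y z := h.symm

theorem edge_unique (hmatch : ∀ e ∈ A, ∀ f ∈ A, e ≠ f → Disjoint e f)
    {z : Fin n} {e f : Finset (Fin n)} (he : e ∈ A) (hf : f ∈ A)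
    (hze : z ∈ e) (hzf : z ∈ f) : e = f := by
  by_contra hef
  exact (Finset.disjoint_left.mp (hmatch e he f hf hef)) hze hzf

/-- A walk in `WSet` has a valid last step. -/
theorem WSet_last_step {x : Fin n} {ℓ : ℕ} {p : Fin n × Bool} {rest : List (Fin n × Bool)}
    (h : p :: rest ∈ WSet A x ℓ) : StepOK A p.2 (epoint x rest) p.1 := by
  rcases ℓ with - | ℓ
  · simp [WSet] at h
  · obtain ⟨l, hl, st, hst, heq⟩ := mem_WSet_succ.mp h
    cases heq
    exact hst.1

section CountBounds

/-- number of hyperedge extensions of a single walk. -/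
theorem card_extF {q : ℕ} (hq : ∀ e ∈ A, e.card = q)
    (hmatch : ∀ e ∈ A, ∀ f ∈ A, e ≠ f → Disjoint e f)
    (x : Fin n) (l : List (Fin n × Bool)) :
    ((Finset.univ.filter (fun st : Fin n × Bool => ExtOK A x l st ∧ st.2 = false))).card
      ≤ q - 1 := by
  by_cases hz : ∃ e ∈ A, epoint x l ∈ e
  · obtain ⟨e, he, hze⟩ := hz
    have hsub : (Finset.univ.filter (fun st : Fin n × Bool => ExtOK A x l st ∧ st.2 = false))
        ⊆ (e.erase (epoint x l)).image (fun y => (y, false)) := by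
      rintro ⟨y, b⟩ hyb
      rw [Finset.mem_filter] at hyb
      obtain ⟨-, hext, hb⟩ := hyb
      cases hb
      have := hext.1
      rw [stepOK_false_iff] at this
      obtain ⟨hne, f, hf, hzf, hyf⟩ := this
      have : f = e := edge_unique hmatch hf he hzf hze
      subst this
      exact Finset.mem_image.mpr ⟨y, Finset.mem_erase.mpr ⟨hne.symm, hyf⟩, rfl⟩
    calc _ ≤ ((e.erase (epoint x l)).image (fun y => (y, false))).card :=
            Finset.card_le_card hsub
      _ ≤ (e.erase (epoint x l)).card := Finset.card_image_le
      _ = q - 1 := by rw [Finset.card_erase_of_mem hze, hq e he]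
  · have : (Finset.univ.filter (fun st : Fin n × Bool => ExtOK A x l st ∧ st.2 = false)) = ∅ := by
      rw [Finset.eq_empty_iff_forall_notMem]
      rintro ⟨y, b⟩ hyb
      rw [Finset.mem_filter] at hyb
      obtain ⟨-, hext, hb⟩ := hyb
      cases hb
      have := hext.1
      rw [stepOK_false_iff] at this
      obtain ⟨hne, f, hf, hzf, hyf⟩ := this
      exact hz ⟨f, hf, hzf⟩
    rw [this]
    simp

/-- no hyperedge extensions from an uncovered endpoint. -/
theorem card_extF_uncov (x : Fin n) (l : List (Fin n × Bool))
    (hz : ¬ ∃ e ∈ A, epoint x l ∈ e) :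
    ((Finset.univ.filter (fun st : Fin n × Bool => ExtOK A x l st ∧ st.2 = false))).card = 0 := by
  rw [Finset.card_eq_zero, Finset.eq_empty_iff_forall_notMem]
  rintro ⟨y, b⟩ hyb
  rw [Finset.mem_filter] at hyb
  obtain ⟨-, hext, hb⟩ := hyb
  cases hb
  have := hext.1
  rw [stepOK_false_iff] at this
  obtain ⟨hne, f, hf, hzf, hyf⟩ := this
  exact hz ⟨f, hf, hzf⟩

/-- number of Hamiltonian extensions of a single walk: at most 2. -/
theorem card_extH (hn : 2 ≤ n) (x : Fin n) (l : List (Fin n × Bool)) :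
    ((Finset.univ.filter (fun st : Fin n × Bool => ExtOK A x l st ∧ st.2 = true))).card ≤ 2 := by
  have hsub : (Finset.univ.filter (fun st : Fin n × Bool => ExtOK A x l st ∧ st.2 = true))
      ⊆ (hamNbrs hn (epoint x l)).image (fun y => (y, true)) := by
    rintro ⟨y, b⟩ hyb
    rw [Finset.mem_filter] at hyb
    obtain ⟨-, hext, hb⟩ := hyb
    cases hb
    have := hext.1
    rw [stepOK_true_iff] at this
    exact Finset.mem_image.mpr ⟨y, mem_hamNbrs hn this, rfl⟩
  calc _ ≤ _ := Finset.card_le_card hsub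
    _ ≤ (hamNbrs hn (epoint x l)).card := Finset.card_image_le
    _ ≤ 2 := card_hamNbrs hn _

/-- after a Hamiltonian step, at most one Hamiltonian extension (no U-turn). -/
theorem card_extH_afterH (hn : 2 ≤ n) (x : Fin n) {ℓ : ℕ} {p : Fin n × Bool} {rest : List (Fin n × Bool)}
    (hmem : p :: rest ∈ WSet A x ℓ) (hp : p.2 = true) :
    ((Finset.univ.filter
      (fun st : Fin n × Bool => ExtOK A x (p :: rest) st ∧ st.2 = true))).card ≤ 1 := by
  have hlast := WSet_last_step hmem
  rw [hp, stepOK_true_iff] at hlast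
  have hprevmem : epoint x rest ∈ hamNbrs hn p.1 := mem_hamNbrs hn hlast.symm
  have hsub : (Finset.univ.filter
      (fun st : Fin n × Bool => ExtOK A x (p :: rest) st ∧ st.2 = true))
      ⊆ ((hamNbrs hn p.1).erase (epoint x rest)).image (fun y => (y, true)) := by
    rintro ⟨y, b⟩ hyb
    rw [Finset.mem_filter] at hyb
    obtain ⟨-, hext, hb⟩ := hyb
    cases hb
    have h1 := hext.1
    rw [stepOK_true_iff] at h1
    have h2 := (hext.2 p rest rfl).2
    refine Finset.mem_image.mpr ⟨y, Finset.mem_erase.mpr ⟨?_, mem_hamNbrs hn h1⟩, rfl⟩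
    intro hy
    exact h2 ⟨hp, rfl, hy⟩
  calc _ ≤ _ := Finset.card_le_card hsub
    _ ≤ ((hamNbrs hn p.1).erase (epoint x rest)).card := Finset.card_image_le
    _ ≤ (hamNbrs hn p.1).card - 1 := le_of_eq (Finset.card_erase_of_mem hprevmem)
    _ ≤ 1 := by have := card_hamNbrs hn p.1; omega

theorem card_WF_one {q : ℕ} (hq : ∀ e ∈ A, e.card = q)
    (hmatch : ∀ e ∈ A, ∀ f ∈ A, e ≠ f → Disjoint e f) (x : Fin n) :
    (WF A x 1).card ≤ q - 1 := by
  have hsub : WF A x 1 ⊆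
      (Finset.univ.filter (fun st : Fin n × Bool => ExtOK A x [] st ∧ st.2 = false)).image
        (fun st => [st]) := by
    intro l' hl'
    obtain ⟨hW, p, rest, heq, hp⟩ := Finset.mem_filter.mp hl'
    obtain ⟨l₀, hl₀, st, hst, heq₂⟩ := mem_WSet_succ.mp hW
    simp only [WSet, Finset.mem_singleton] at hl₀
    subst hl₀
    subst heq₂
    obtain ⟨rfl, -⟩ := List.cons.injEq .. |>.mp heq
    exact Finset.mem_image.mpr ⟨st, Finset.mem_filter.mpr ⟨Finset.mem_univ _, hst, hp⟩, rfl⟩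
  calc (WF A x 1).card ≤ _ := Finset.card_le_card hsub
    _ ≤ _ := Finset.card_image_le
    _ ≤ q - 1 := card_extF hq hmatch x []

theorem card_WF_one_uncov (x : Fin n) (hx : ¬ ∃ e ∈ A, x ∈ e) :
    (WF A x 1).card = 0 := by
  rw [Finset.card_eq_zero, Finset.eq_empty_iff_forall_notMem]
  intro l' hl'
  obtain ⟨hW, p, rest, heq, hp⟩ := Finset.mem_filter.mp hl'
  obtain ⟨l₀, hl₀, st, hst, heq₂⟩ := mem_WSet_succ.mp hW
  simp only [WSet, Finset.mem_singleton] at hl₀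
  subst hl₀
  subst heq₂
  obtain ⟨rfl, -⟩ := List.cons.injEq .. |>.mp heq
  have := hst.1
  rw [hp, stepOK_false_iff] at this
  obtain ⟨-, f, hf, hzf, -⟩ := this
  exact hx ⟨f, hf, hzf⟩

theorem card_WH_one (hn : 2 ≤ n) (x : Fin n) : (WH A x 1).card ≤ 2 := by
  have hsub : WH A x 1 ⊆
      (Finset.univ.filter (fun st : Fin n × Bool => ExtOK A x [] st ∧ st.2 = true)).image
        (fun st => [st]) := by
    intro l' hl'
    obtain ⟨hW, p, rest, heq, hp⟩ := Finset.mem_filter.mp hl'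
    obtain ⟨l₀, hl₀, st, hst, heq₂⟩ := mem_WSet_succ.mp hW
    simp only [WSet, Finset.mem_singleton] at hl₀
    subst hl₀
    subst heq₂
    obtain ⟨rfl, -⟩ := List.cons.injEq .. |>.mp heq
    exact Finset.mem_image.mpr ⟨st, Finset.mem_filter.mpr ⟨Finset.mem_univ _, hst, hp⟩, rfl⟩
  calc (WH A x 1).card ≤ _ := Finset.card_le_card hsub
    _ ≤ _ := Finset.card_image_le
    _ ≤ 2 := card_extH hn x []

theorem card_WF_succ {q : ℕ} (hq : ∀ e ∈ A, e.card = q)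
    (hmatch : ∀ e ∈ A, ∀ f ∈ A, e ≠ f → Disjoint e f) (x : Fin n) (ℓ : ℕ)
    (hzero : ℓ ≠ 0) :
    (WF A x (ℓ + 1)).card ≤ (WH A x ℓ).card * (q - 1) := by
  have hsub : WF A x (ℓ + 1) ⊆ (WH A x ℓ).biUnion (fun l =>
      (Finset.univ.filter (fun st : Fin n × Bool => ExtOK A x l st ∧ st.2 = false)).image
        (fun st => st :: l)) := by
    intro l' hl'
    obtain ⟨hW, p, rest, heq, hp⟩ := Finset.mem_filter.mp hl'
    obtain ⟨l₀, hl₀, st, hst, heq₂⟩ := mem_WSet_succ.mp hW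
    subst heq₂
    obtain ⟨rfl, rfl⟩ := List.cons.injEq .. |>.mp heq
    have hparent : l₀ ∈ WH A x ℓ := by
      rcases hrest : l₀ with - | ⟨p', rest'⟩
      · exfalso
        subst hrest
        have := WSet_length hl₀
        simp at this
        subst this
        -- ℓ = 0 : the parent is empty; handled by hℓ hypothesis
        exact absurd rfl hzero
      · subst hrest
        have hv := (hst.2 p' rest' rfl).1
        refine Finset.mem_filter.mpr ⟨hl₀, p', rest', rfl, ?_⟩
        rcases Bool.eq_false_or_eq_true p'.2 with h | h
        · exact h
        · exact absurd ⟨h, hp⟩ hv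
    exact Finset.mem_biUnion.mpr ⟨l₀, hparent,
      Finset.mem_image.mpr ⟨st, Finset.mem_filter.mpr ⟨Finset.mem_univ _, hst, hp⟩, rfl⟩⟩
  calc (WF A x (ℓ + 1)).card ≤ _ := Finset.card_le_card hsub
    _ ≤ (WH A x ℓ).card * (q - 1) :=
        Finset.card_biUnion_le_card_mul _ _ _ (fun l _ =>
          le_trans Finset.card_image_le (card_extF hq hmatch x l))

theorem card_WH_succ (hn : 2 ≤ n) (x : Fin n) (ℓ : ℕ) (hℓ : 1 ≤ ℓ) :
    (WH A x (ℓ + 1)).card ≤ (WH A x ℓ).card * 1 + (WF A x ℓ).card * 2 := by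
  have hsub : WH A x (ℓ + 1) ⊆
      ((WH A x ℓ).biUnion (fun l =>
        (Finset.univ.filter (fun st : Fin n × Bool => ExtOK A x l st ∧ st.2 = true)).image
          (fun st => st :: l)))
      ∪ ((WF A x ℓ).biUnion (fun l =>
        (Finset.univ.filter (fun st : Fin n × Bool => ExtOK A x l st ∧ st.2 = true)).image
          (fun st => st :: l))) := by
    intro l' hl'
    obtain ⟨hW, p, rest, heq, hp⟩ := Finset.mem_filter.mp hl'
    obtain ⟨l₀, hl₀, st, hst, heq₂⟩ := mem_WSet_succ.mp hW
    subst heq₂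
    obtain ⟨rfl, rfl⟩ := List.cons.injEq .. |>.mp heq
    have hmem : st ∈ Finset.univ.filter
        (fun st' : Fin n × Bool => ExtOK A x l₀ st' ∧ st'.2 = true) :=
      Finset.mem_filter.mpr ⟨Finset.mem_univ _, hst, hp⟩
    rcases Finset.mem_union.mp (WSet_subset_WH_union_WF hℓ hl₀) with h | h
    · exact Finset.mem_union_left _
        (Finset.mem_biUnion.mpr ⟨l₀, h, Finset.mem_image.mpr ⟨st, hmem, rfl⟩⟩)
    · exact Finset.mem_union_right _
        (Finset.mem_biUnion.mpr ⟨l₀, h, Finset.mem_image.mpr ⟨st, hmem, rfl⟩⟩)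
  calc (WH A x (ℓ + 1)).card ≤ _ := Finset.card_le_card hsub
    _ ≤ _ + _ := Finset.card_union_le _ _
    _ ≤ (WH A x ℓ).card * 1 + (WF A x ℓ).card * 2 := by
        gcongr ?_ + ?_
        · refine Finset.card_biUnion_le_card_mul _ _ _ (fun l hl => ?_)
          obtain ⟨hlW, p', rest', heq', hp'⟩ := Finset.mem_filter.mp hl
          subst heq'
          exact le_trans Finset.card_image_le (card_extH_afterH hn x hlW hp')
        · refine Finset.card_biUnion_le_card_mul _ _ _ (fun l hl => ?_)
          exact le_trans Finset.card_image_le (card_extH hn x l)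

end CountBounds

section Convert

/-- restriction of a chain to a shorter length. -/
theorem isChain_of_le {A : Finset (Finset (Fin n))} {k k' : ℕ} (h : k' ≤ k) {v s}
    (hc : IsChain A k v s) : IsChain A k' v s :=
  ⟨fun i hi => hc.1 i (by omega), fun i hi => hc.2 i (by omega)⟩

/-- the walk list associated to a chain. -/
def chainList (v : ℕ → Fin n) (s : ℕ → Bool) : ℕ → List (Fin n × Bool)
  | 0 => []
  | (k+1) => (v (k+1), s k) :: chainList v s k

theorem chainList_epoint {v : ℕ → Fin n} {s : ℕ → Bool} (k : ℕ) :
    epoint (v 0) (chainList v s k) = v k := by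
  cases k with
  | zero => rfl
  | succ k => rfl

theorem chainList_mem {A : Finset (Finset (Fin n))} {v : ℕ → Fin n} {s : ℕ → Bool} :
    ∀ k, IsChain A k v s → chainList v s k ∈ WSet A (v 0) k := by
  intro k
  induction k with
  | zero => intro _; simp [WSet, chainList]
  | succ k ih =>
    intro hc
    refine mem_WSet_succ.mpr ⟨chainList v s k, ih (isChain_of_le (by omega) hc),
      (v (k+1), s k), ⟨?_, ?_⟩, rfl⟩
    · rw [chainList_epoint k]
      exact hc.1 k (by omega)
    · intro p rest heq
      cases k with
      | zero => simp [chainList] at heq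
      | succ k' =>
        rw [chainList] at heq
        obtain ⟨rfl, rfl⟩ := List.cons.injEq .. |>.mp heq
        rw [chainList_epoint k']
        exact hc.2 k' (by omega)

theorem chainList_mem_WH {A : Finset (Finset (Fin n))} {v : ℕ → Fin n} {s : ℕ → Bool}
    {k : ℕ} (hk : 1 ≤ k) (hc : IsChain A k v s) (hlast : s (k - 1) = true) :
    chainList v s k ∈ WH A (v 0) k := by
  refine Finset.mem_filter.mpr ⟨chainList_mem k hc, ?_⟩
  rcases k with - | k
  · omega
  · exact ⟨(v (k+1), s k), chainList v s k, rfl, by simpa using hlast⟩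

/-- the ball of radius `d` around `x`. -/
noncomputable def Ball (A : Finset (Finset (Fin n))) (d : ℕ) (x : Fin n) : Finset (Fin n) :=
  Finset.univ.filter (fun y => ReachC A d x y)

open Classical in
theorem card_Ball_le (A : Finset (Finset (Fin n))) (d : ℕ) (x : Fin n) :
    (Ball A d x).card ≤ ∑ ℓ ∈ Finset.range (d+1), (WSet A x ℓ).card := by
  classical
  have hmap : ∀ y ∈ Ball A d x, ∃ l ∈ (Finset.range (d+1)).biUnion (WSet A x),
      epoint x l = y := by
    intro y hy
    obtain ⟨-, k, hk, v, s, hc, h0, h1⟩ := Finset.mem_filter.mp hy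
    subst h0
    refine ⟨chainList v s k, Finset.mem_biUnion.mpr
      ⟨k, Finset.mem_range.mpr (by omega), chainList_mem k hc⟩, ?_⟩
    rw [chainList_epoint k, h1]
  choose f hf1 hf2 using hmap
  calc (Ball A d x).card ≤ ((Finset.range (d+1)).biUnion (WSet A x)).card := by
        apply Finset.card_le_card_of_injOn (fun y => if h : y ∈ Ball A d x then f y h else [])
        · intro y hy
          rw [Finset.mem_coe] at hy; simp only [Finset.mem_coe, dif_pos hy]
          exact hf1 y hy
        · intro y hy y' hy' heq
          rw [Finset.mem_coe] at hy hy'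
          dsimp only at heq
          rw [dif_pos hy, dif_pos hy'] at heq
          rw [← hf2 y hy, ← hf2 y' hy', heq]
    _ ≤ _ := Finset.card_biUnion_le

/-- the set of hyperedges within distance `d` of `x`. -/
noncomputable def NearEdges (A : Finset (Finset (Fin n))) (d : ℕ) (x : Fin n) :
    Finset (Finset (Fin n)) :=
  A.filter (fun e => ∃ y ∈ e, ReachC A d x y)

/-- a shortest chain to an edge ends with a Hamiltonian step. -/
theorem reach_edge_H {A : Finset (Finset (Fin n))}
    (hmatch : ∀ e ∈ A, ∀ f ∈ A, e ≠ f → Disjoint e f)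
    {d : ℕ} {x : Fin n} {e : Finset (Fin n)} (he : e ∈ A) :
    ∀ k, k ≤ d → ∀ (v : ℕ → Fin n) (s : ℕ → Bool), IsChain A k v s → v 0 = x → v k ∈ e →
    (x ∈ e) ∨ ∃ k', 1 ≤ k' ∧ k' ≤ d ∧ ∃ v' s', IsChain A k' v' s' ∧ v' 0 = x ∧ v' k' ∈ e
      ∧ s' (k' - 1) = true := by
  intro k
  induction k using Nat.strong_induction_on with
  | _ k ih =>
    intro hkd v s hc h0 hke
    rcases Nat.eq_zero_or_pos k with rfl | hk
    · left; rw [← h0]; exact hke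
    rcases Bool.eq_false_or_eq_true (s (k-1)) with hlast | hlast
    · right
      exact ⟨k, hk, hkd, v, s, hc, h0, hke, hlast⟩
    · -- the last step is a hyperedge step inside e; truncate
      have hstep := hc.1 (k-1) (by omega)
      rw [hlast, stepOK_false_iff] at hstep
      rw [show k - 1 + 1 = k by omega] at hstep
      obtain ⟨hne, f, hf, hk1f, hkf⟩ := hstep
      have : f = e := edge_unique hmatch hf he hkf hke
      subst this
      exact ih (k-1) (by omega) (by omega) v s (isChain_of_le (by omega) hc) h0 hk1f

open Classical in
theorem card_NearEdges_le {A : Finset (Finset (Fin n))}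
    (hmatch : ∀ e ∈ A, ∀ f ∈ A, e ≠ f → Disjoint e f) (d : ℕ) (x : Fin n) :
    (NearEdges A d x).card ≤ 1 + ∑ ℓ ∈ Finset.Icc 1 d, (WH A x ℓ).card := by
  classical
  have hmap : ∀ e ∈ NearEdges A d x,
      ∃ l ∈ insert ([] : List (Fin n × Bool)) ((Finset.Icc 1 d).biUnion (WH A x)),
        (l = [] → x ∈ e) ∧ (l ≠ [] → epoint x l ∈ e) := by
    intro e hee
    obtain ⟨he, y, hy, k, hkd, v, s, hc, h0, h1⟩ := Finset.mem_filter.mp hee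
    have h1e : v k ∈ e := by rw [h1]; exact hy
    rcases reach_edge_H hmatch he k hkd v s hc h0 h1e with hx | ⟨k', hk1, hk'd, v', s', hc', h0', hke', hlast'⟩
    · exact ⟨[], Finset.mem_insert_self _ _, fun _ => hx, fun h => absurd rfl h⟩
    · refine ⟨chainList v' s' k', Finset.mem_insert.mpr (Or.inr (Finset.mem_biUnion.mpr
        ⟨k', Finset.mem_Icc.mpr ⟨hk1, hk'd⟩, by rw [← h0']; exact chainList_mem_WH hk1 hc' hlast'⟩)), ?_, ?_⟩
      · intro h
        rcases k' with - | k'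
        · omega
        · simp [chainList] at h
      · intro _
        rw [← h0', chainList_epoint k']
        exact hke'
  choose f hf1 hf2 using hmap
  calc (NearEdges A d x).card
      ≤ (insert ([] : List (Fin n × Bool)) ((Finset.Icc 1 d).biUnion (WH A x))).card := by
        apply Finset.card_le_card_of_injOn
          (fun e => if h : e ∈ NearEdges A d x then f e h else [])
        · intro e he
          rw [Finset.mem_coe] at he; simp only [Finset.mem_coe, dif_pos he]
          exact hf1 e he
        · intro e he e' he' heq
          rw [Finset.mem_coe] at he he'
          dsimp only at heq
          rw [dif_pos he, dif_pos he'] at heq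
          have heA : e ∈ A := (Finset.mem_filter.mp he).1
          have heA' : e' ∈ A := (Finset.mem_filter.mp he').1
          obtain ⟨g1, g2⟩ := hf2 e he
          obtain ⟨g1', g2'⟩ := hf2 e' he'
          rw [heq] at g1 g2
          by_cases hnil : f e' he' = []
          · exact edge_unique hmatch heA heA' (g1 hnil) (g1' hnil)
          · exact edge_unique hmatch heA heA' (g2 hnil) (g2' hnil)
    _ ≤ 1 + _ := by
        apply le_trans (Finset.card_insert_le _ _)
        rw [Nat.add_comm]
        exact Nat.add_le_add_left Finset.card_biUnion_le 1

end Convert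

section NumBounds

/-- Upper bound sequence for the number of walks ending with a Hamiltonian step. -/
def Bh (q : ℕ) : ℕ → ℕ
  | 0 => 1
  | 1 => 2
  | (ℓ+2) => Bh q (ℓ+1) + 2 * ((q - 1) * Bh q ℓ)

/-- Upper bound for the number of walks ending with a hyperedge step. -/
def Bf (q : ℕ) : ℕ → ℕ
  | 0 => 0
  | (ℓ+1) => (q - 1) * Bh q ℓ

/-- Bound sequences for walks starting at an uncovered vertex. -/
def Bu (q : ℕ) : ℕ → ℕ
  | 0 => 1
  | 1 => 2
  | 2 => 2
  | (ℓ+3) => Bu q (ℓ+2) + 2 * ((q - 1) * Bu q (ℓ+1))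

def Bfu (q : ℕ) : ℕ → ℕ
  | 0 => 0
  | 1 => 0
  | (ℓ+2) => (q - 1) * Bu q (ℓ+1)

theorem card_WH_le_zero {A : Finset (Finset (Fin n))} (x : Fin n) : (WH A x 0).card ≤ 1 := by
  have : WH A x 0 ⊆ WSet A x 0 := Finset.filter_subset _ _
  calc (WH A x 0).card ≤ (WSet A x 0).card := Finset.card_le_card this
    _ = 1 := by simp [WSet]

theorem card_WF_le_zero {A : Finset (Finset (Fin n))} (x : Fin n) : (WF A x 0).card = 0 := by
  rw [Finset.card_eq_zero, Finset.eq_empty_iff_forall_notMem]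
  intro l hl
  obtain ⟨hW, p, rest, heq, -⟩ := Finset.mem_filter.mp hl
  simp only [WSet, Finset.mem_singleton] at hW
  subst hW
  simp at heq

theorem WH_WF_le_B {q : ℕ} {A : Finset (Finset (Fin n))} (hn : 2 ≤ n)
    (hq : ∀ e ∈ A, e.card = q) (hmatch : ∀ e ∈ A, ∀ f ∈ A, e ≠ f → Disjoint e f)
    (x : Fin n) : ∀ ℓ, (WH A x ℓ).card ≤ Bh q ℓ ∧ (WF A x ℓ).card ≤ Bf q ℓ := by
  intro ℓ
  induction ℓ using Nat.strong_induction_on with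
  | _ ℓ ih =>
    match ℓ with
    | 0 => exact ⟨card_WH_le_zero x, le_of_eq (card_WF_le_zero x)⟩
    | 1 =>
      refine ⟨card_WH_one hn x, ?_⟩
      have := card_WF_one hq hmatch x
      simpa [Bf, Bh] using this
    | (ℓ+2) =>
      constructor
      · calc (WH A x (ℓ+2)).card ≤ (WH A x (ℓ+1)).card * 1 + (WF A x (ℓ+1)).card * 2 :=
              card_WH_succ hn x (ℓ+1) (by omega)
          _ ≤ Bh q (ℓ+1) * 1 + Bf q (ℓ+1) * 2 := by
              gcongr
              · exact (ih (ℓ+1) (by omega)).1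
              · exact (ih (ℓ+1) (by omega)).2
          _ = Bh q (ℓ+2) := by simp [Bh, Bf]; ring
      · calc (WF A x (ℓ+2)).card ≤ (WH A x (ℓ+1)).card * (q-1) :=
              card_WF_succ hq hmatch x (ℓ+1) (by omega)
          _ ≤ Bh q (ℓ+1) * (q-1) := by gcongr; exact (ih (ℓ+1) (by omega)).1
          _ = Bf q (ℓ+2) := by simp [Bf]; ring

theorem WH_WF_le_Bu {q : ℕ} {A : Finset (Finset (Fin n))} (hn : 2 ≤ n)
    (hq : ∀ e ∈ A, e.card = q) (hmatch : ∀ e ∈ A, ∀ f ∈ A, e ≠ f → Disjoint e f)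
    (x : Fin n) (hx : ¬ ∃ e ∈ A, x ∈ e) :
    ∀ ℓ, (WH A x ℓ).card ≤ Bu q ℓ ∧ (WF A x ℓ).card ≤ Bfu q ℓ := by
  intro ℓ
  induction ℓ using Nat.strong_induction_on with
  | _ ℓ ih =>
    match ℓ with
    | 0 => exact ⟨card_WH_le_zero x, le_of_eq (card_WF_le_zero x)⟩
    | 1 =>
      exact ⟨card_WH_one hn x, le_of_eq (card_WF_one_uncov x hx)⟩
    | (ℓ+2) =>
      constructor
      · calc (WH A x (ℓ+2)).card ≤ (WH A x (ℓ+1)).card * 1 + (WF A x (ℓ+1)).card * 2 :=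
              card_WH_succ hn x (ℓ+1) (by omega)
          _ ≤ Bu q (ℓ+1) * 1 + Bfu q (ℓ+1) * 2 := by
              gcongr
              · exact (ih (ℓ+1) (by omega)).1
              · exact (ih (ℓ+1) (by omega)).2
          _ ≤ Bu q (ℓ+2) := by
              match ℓ with
              | 0 => simp [Bu, Bfu]
              | (ℓ+1) => simp [Bu, Bfu]; ring_nf; omega
      · calc (WF A x (ℓ+2)).card ≤ (WH A x (ℓ+1)).card * (q-1) :=
              card_WF_succ hq hmatch x (ℓ+1) (by omega)
          _ ≤ Bu q (ℓ+1) * (q-1) := by gcongr; exact (ih (ℓ+1) (by omega)).1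
          _ = Bfu q (ℓ+2) := by simp [Bfu]; ring

end NumBounds

section MoreCounting

theorem reachC_refl (A : Finset (Finset (Fin n))) (d : ℕ) (x : Fin n) : ReachC A d x x :=
  ⟨0, by omega, (fun _ => x), (fun _ => false),
    ⟨fun i hi => by omega, fun i hi => by omega⟩, rfl, rfl⟩

open Classical in
theorem card_NearEdges_le_uncov {A : Finset (Finset (Fin n))}
    (hmatch : ∀ e ∈ A, ∀ f ∈ A, e ≠ f → Disjoint e f) (d : ℕ) (x : Fin n)
    (hx : ¬ ∃ e ∈ A, x ∈ e) :
    (NearEdges A d x).card ≤ ∑ ℓ ∈ Finset.Icc 1 d, (WH A x ℓ).card := by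
  classical
  have hmap : ∀ e ∈ NearEdges A d x,
      ∃ l ∈ (Finset.Icc 1 d).biUnion (WH A x), epoint x l ∈ e := by
    intro e hee
    obtain ⟨he, y, hy, k, hkd, v, s, hc, h0, h1⟩ := Finset.mem_filter.mp hee
    have h1e : v k ∈ e := by rw [h1]; exact hy
    rcases reach_edge_H hmatch he k hkd v s hc h0 h1e with hxe |
      ⟨k', hk1, hk'd, v', s', hc', h0', hke', hlast'⟩
    · exact absurd ⟨e, he, hxe⟩ hx
    · refine ⟨chainList v' s' k', Finset.mem_biUnion.mpr
        ⟨k', Finset.mem_Icc.mpr ⟨hk1, hk'd⟩,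
          by rw [← h0']; exact chainList_mem_WH hk1 hc' hlast'⟩, ?_⟩
      rw [← h0', chainList_epoint k']
      exact hke'
  choose f hf1 hf2 using hmap
  calc (NearEdges A d x).card ≤ ((Finset.Icc 1 d).biUnion (WH A x)).card := by
        apply Finset.card_le_card_of_injOn
          (fun e => if h : e ∈ NearEdges A d x then f e h else [])
        · intro e he
          rw [Finset.mem_coe] at he; simp only [Finset.mem_coe, dif_pos he]
          exact hf1 e he
        · intro e he e' he' heq
          rw [Finset.mem_coe] at he he'
          dsimp only at heq
          rw [dif_pos he, dif_pos he'] at heq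
          have heA : e ∈ A := (Finset.mem_filter.mp he).1
          have heA' : e' ∈ A := (Finset.mem_filter.mp he').1
          have g2 := hf2 e he
          have g2' := hf2 e' he'
          rw [heq] at g2
          exact edge_unique hmatch heA heA' g2 g2'
    _ ≤ _ := Finset.card_biUnion_le

theorem range_succ_eq_insert_Icc (d : ℕ) : Finset.range (d+1) = insert 0 (Finset.Icc 1 d) := by
  ext j
  simp only [Finset.mem_range, Finset.mem_insert, Finset.mem_Icc]
  omega

/-- Numeric bound on the ball of an uncovered vertex. -/
theorem ball_card_le_uncov {q : ℕ} {A : Finset (Finset (Fin n))} (hn : 2 ≤ n)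
    (hq : ∀ e ∈ A, e.card = q) (hmatch : ∀ e ∈ A, ∀ f ∈ A, e ≠ f → Disjoint e f)
    (d : ℕ) (x : Fin n) (hx : ¬ ∃ e ∈ A, x ∈ e) :
    (Ball A d x).card ≤ 1 + ∑ ℓ ∈ Finset.Icc 1 d, (Bu q ℓ + Bfu q ℓ) := by
  calc (Ball A d x).card ≤ ∑ ℓ ∈ Finset.range (d+1), (WSet A x ℓ).card := card_Ball_le A d x
    _ = (WSet A x 0).card + ∑ ℓ ∈ Finset.Icc 1 d, (WSet A x ℓ).card := by
        rw [range_succ_eq_insert_Icc, Finset.sum_insert (by simp)]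
    _ ≤ 1 + ∑ ℓ ∈ Finset.Icc 1 d, (Bu q ℓ + Bfu q ℓ) := by
        gcongr with ℓ hℓ
        · simp [WSet]
        · have hmem : 1 ≤ ℓ := (Finset.mem_Icc.mp hℓ).1
          calc (WSet A x ℓ).card ≤ (WH A x ℓ ∪ WF A x ℓ).card :=
                Finset.card_le_card (WSet_subset_WH_union_WF hmem)
            _ ≤ (WH A x ℓ).card + (WF A x ℓ).card := Finset.card_union_le _ _
            _ ≤ Bu q ℓ + Bfu q ℓ := by
                have := WH_WF_le_Bu hn hq hmatch x hx ℓ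
                omega

/-- Numeric bound on the set of edges near an uncovered vertex. -/
theorem nearEdges_card_le_uncov {q : ℕ} {A : Finset (Finset (Fin n))} (hn : 2 ≤ n)
    (hq : ∀ e ∈ A, e.card = q) (hmatch : ∀ e ∈ A, ∀ f ∈ A, e ≠ f → Disjoint e f)
    (d : ℕ) (x : Fin n) (hx : ¬ ∃ e ∈ A, x ∈ e) :
    (NearEdges A d x).card ≤ ∑ ℓ ∈ Finset.Icc 1 d, Bu q ℓ := by
  calc (NearEdges A d x).card ≤ ∑ ℓ ∈ Finset.Icc 1 d, (WH A x ℓ).card :=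
        card_NearEdges_le_uncov hmatch d x hx
    _ ≤ _ := by
        gcongr with ℓ hℓ
        exact (WH_WF_le_Bu hn hq hmatch x hx ℓ).1

/-- Numeric bound on the set of edges near any vertex. -/
theorem nearEdges_card_le_cov {q : ℕ} {A : Finset (Finset (Fin n))} (hn : 2 ≤ n)
    (hq : ∀ e ∈ A, e.card = q) (hmatch : ∀ e ∈ A, ∀ f ∈ A, e ≠ f → Disjoint e f)
    (d : ℕ) (x : Fin n) :
    (NearEdges A d x).card ≤ 1 + ∑ ℓ ∈ Finset.Icc 1 d, Bh q ℓ := by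
  calc (NearEdges A d x).card ≤ 1 + ∑ ℓ ∈ Finset.Icc 1 d, (WH A x ℓ).card :=
        card_NearEdges_le hmatch d x
    _ ≤ _ := by
        gcongr with ℓ hℓ
        exact (WH_WF_le_B hn hq hmatch x ℓ).1

end MoreCounting

end Counting

section Greedy

open Classical

/-- The set of vertices not covered by any edge of `A`. -/
noncomputable def Uncov (A : Finset (Finset (Fin n))) : Finset (Fin n) :=
  Finset.univ.filter (fun x => ¬ ∃ e ∈ A, x ∈ e)

theorem card_Uncov {q : ℕ} {A : Finset (Finset (Fin n))}
    (hq : ∀ e ∈ A, e.card = q) (hmatch : ∀ e ∈ A, ∀ f ∈ A, e ≠ f → Disjoint e f) :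
    (Uncov A).card = n - q * A.card := by
  classical
  have hcov : (A.biUnion (fun e => e)).card = q * A.card := by
    rw [Finset.card_biUnion (fun e he f hf hef => hmatch e he f hf hef)]
    rw [show (∑ u ∈ A, u.card) = ∑ u ∈ A, q from
      Finset.sum_congr rfl (fun e he => hq e he), Finset.sum_const, smul_eq_mul, mul_comm]
  have : Uncov A = Finset.univ \ A.biUnion (fun e => e) := by
    ext x
    simp only [Uncov, Finset.mem_filter, Finset.mem_univ, true_and, Finset.mem_sdiff,
      Finset.mem_biUnion]
  rw [this, Finset.card_sdiff_of_subset (Finset.subset_univ _), hcov, Finset.card_univ,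
    Fintype.card_fin]

/-- A maximal pairwise-far subset of the uncovered vertices covers them by balls. -/
theorem exists_max_far (A : Finset (Finset (Fin n))) (d : ℕ) :
    ∃ S ⊆ Uncov A, (∀ x ∈ S, ∀ y ∈ S, x ≠ y → ¬ReachC A d x y) ∧
      (∀ u ∈ Uncov A, ∃ s ∈ S, ReachC A d s u) := by
  classical
  set P := (Uncov A).powerset.filter
    (fun S => ∀ x ∈ S, ∀ y ∈ S, x ≠ y → ¬ReachC A d x y) with hP
  have hne : P.Nonempty := ⟨∅, Finset.mem_filter.mpr ⟨Finset.mem_powerset.mpr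
    (Finset.empty_subset _), by simp⟩⟩
  obtain ⟨S, hSP, hmax⟩ := Finset.exists_max_image P Finset.card hne
  obtain ⟨hSsub, hSfar⟩ := Finset.mem_filter.mp hSP
  rw [Finset.mem_powerset] at hSsub
  refine ⟨S, hSsub, hSfar, ?_⟩
  intro u hu
  by_cases huS : u ∈ S
  · exact ⟨u, huS, reachC_refl A d u⟩
  · by_cases hfar' : ∀ x ∈ insert u S, ∀ y ∈ insert u S, x ≠ y → ¬ReachC A d x y
    · exfalso
      have hmem : insert u S ∈ P := Finset.mem_filter.mpr
        ⟨Finset.mem_powerset.mpr (Finset.insert_subset hu hSsub), hfar'⟩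
      have := hmax _ hmem
      rw [Finset.card_insert_of_notMem huS] at this
      omega
    · push_neg at hfar'
      obtain ⟨x, hx, y, hy, hxy, hreach⟩ := hfar'
      rcases Finset.mem_insert.mp hx with rfl | hxS
      · rcases Finset.mem_insert.mp hy with rfl | hyS
        · exact absurd rfl hxy
        · exact ⟨y, hyS, reachC_symm hreach⟩
      · rcases Finset.mem_insert.mp hy with rfl | hyS
        · exact ⟨x, hxS, hreach⟩
        · exact absurd hreach (hSfar x hxS y hyS hxy)

/-- Greedy selection of `t` pairwise-far edges, far from the vertices of `us`. -/
theorem greedy_edges {A : Finset (Finset (Fin n))} {q : ℕ} (hq : ∀ e ∈ A, e.card = q)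
    (hq1 : 1 ≤ q) (d : ℕ) (us : Finset (Fin n)) (t : ℕ)
    (hcount : ∀ FS : Finset (Finset (Fin n)), FS ⊆ A → FS.card < t →
      (((us.biUnion (NearEdges A d)) ∪
        (FS.biUnion (fun f => f.biUnion (NearEdges A d)))).card < A.card)) :
    ∃ FS ⊆ A, FS.card = t ∧
      (∀ f ∈ FS, ∀ u ∈ us, ∀ y ∈ f, ¬ReachC A d u y) ∧
      (∀ f ∈ FS, ∀ f' ∈ FS, f ≠ f' → ∀ x ∈ f, ∀ y ∈ f', ¬ReachC A d x y) := by
  classical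
  induction t with
  | zero => exact ⟨∅, Finset.empty_subset _, rfl, by simp, by simp⟩
  | succ t ih =>
    obtain ⟨FS, hFSsub, hFScard, hP1, hP2⟩ := ih (fun FS h1 h2 => hcount FS h1 (by omega))
    have hlt := hcount FS hFSsub (by omega)
    set forb := (us.biUnion (NearEdges A d)) ∪
      (FS.biUnion (fun f => f.biUnion (NearEdges A d))) with hforb
    have hnonempty : (A \ forb).Nonempty := by
      rw [Finset.sdiff_nonempty]
      intro hsub
      exact absurd (Finset.card_le_card hsub) (by omega)
    obtain ⟨e, he⟩ := hnonempty
    obtain ⟨heA, henf⟩ := Finset.mem_sdiff.mp he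
    rw [hforb, Finset.mem_union] at henf
    push_neg at henf
    obtain ⟨hnf1, hnf2⟩ := henf
    rw [Finset.mem_biUnion] at hnf1 hnf2
    push_neg at hnf1 hnf2
    -- e is far from all the us
    have hE1 : ∀ u ∈ us, ∀ y ∈ e, ¬ReachC A d u y := by
      intro u hu y hy hr
      exact hnf1 u hu (Finset.mem_filter.mpr ⟨heA, y, hy, hr⟩)
    -- e is far from all previously picked edges
    have hE2 : ∀ f ∈ FS, ∀ x ∈ f, ∀ y ∈ e, ¬ReachC A d x y := by
      intro f hf x hx y hy hr
      exact hnf2 f hf (Finset.mem_biUnion.mpr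
        ⟨x, hx, Finset.mem_filter.mpr ⟨heA, y, hy, hr⟩⟩)
    have heFS : e ∉ FS := by
      intro heFS
      have hene : e.Nonempty := by
        rw [← Finset.card_pos, hq e heA]; omega
      obtain ⟨x, hx⟩ := hene
      exact hE2 e heFS x hx x hx (reachC_refl A d x)
    refine ⟨insert e FS, Finset.insert_subset heA hFSsub,
      by rw [Finset.card_insert_of_notMem heFS, hFScard], ?_, ?_⟩
    · intro f hf u hu y hy
      rcases Finset.mem_insert.mp hf with rfl | hfFS
      · exact hE1 u hu y hy
      · exact hP1 f hfFS u hu y hy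
    · intro f hf f' hf' hff x hx y hy
      rcases Finset.mem_insert.mp hf with rfl | hfFS
      · rcases Finset.mem_insert.mp hf' with rfl | hf'FS
        · exact absurd rfl hff
        · exact fun hr => hE2 f' hf'FS y hy x hx (reachC_symm hr)
      · rcases Finset.mem_insert.mp hf' with rfl | hf'FS
        · exact hE2 f hfFS x hx y hy
        · exact hP2 f hfFS f' hf'FS hff x hx y hy

end Greedy

section Arith

theorem Bh_zero (q : ℕ) : Bh q 0 = 1 := rfl
theorem Bh_one (q : ℕ) : Bh q 1 = 2 := rfl
theorem Bh_two (q : ℕ) : Bh q 2 = 2 + 2 * (q - 1) := by simp [Bh]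
theorem Bh_succ (q ℓ : ℕ) : Bh q (ℓ+2) = Bh q (ℓ+1) + 2 * ((q-1) * Bh q ℓ) := by
  conv_lhs => rw [Bh]

theorem Bu_one (q : ℕ) : Bu q 1 = 2 := rfl
theorem Bu_two (q : ℕ) : Bu q 2 = 2 := rfl
theorem Bu_succ (q ℓ : ℕ) : Bu q (ℓ+3) = Bu q (ℓ+2) + 2 * ((q-1) * Bu q (ℓ+1)) := by
  conv_lhs => rw [Bu]

theorem Bfu_one (q : ℕ) : Bfu q 1 = 0 := rfl
theorem Bfu_succ (q ℓ : ℕ) : Bfu q (ℓ+2) = (q-1) * Bu q (ℓ+1) := by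
  conv_lhs => rw [Bfu]

/-- refined bound on Bh. -/
theorem Bh_refined {q : ℕ} (hq : 3 ≤ q) : ∀ ℓ, 3 ≤ ℓ → Bh q ℓ + q^(ℓ-2) ≤ 2 * q^(ℓ-1) := by
  intro ℓ
  induction ℓ using Nat.strong_induction_on with
  | _ ℓ ih =>
    intro hℓ
    match ℓ, hℓ with
    | 3, _ =>
      have h3 : Bh q 3 = 2 + 2*(q-1) + 2*((q-1)*2) := by
        rw [show (3:ℕ) = 1 + 2 by rfl, Bh_succ, Bh_two, Bh_one]
      rw [h3, show (3:ℕ)-2 = 1 by rfl, show (3:ℕ)-1 = 2 by rfl, pow_one,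
        show q^2 = q*q by ring]
      zify [show 1 ≤ q by omega]
      nlinarith [hq]
    | 4, _ =>
      have h3 : Bh q 3 = 2 + 2*(q-1) + 2*((q-1)*2) := by
        rw [show (3:ℕ) = 1 + 2 by rfl, Bh_succ, Bh_two, Bh_one]
      have h4 : Bh q 4 = Bh q 3 + 2*((q-1)*(2 + 2*(q-1))) := by
        rw [show (4:ℕ) = 2 + 2 by rfl, Bh_succ, Bh_two]
      rw [h4, h3, show (4:ℕ)-2 = 2 by rfl, show (4:ℕ)-1 = 3 by rfl,
        show q^2 = q*q by ring, show q^3 = q*q*q by ring]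
      zify [show 1 ≤ q by omega]
      nlinarith [hq]
    | (ℓ+5), _ =>
      have ih1 := ih (ℓ+4) (by omega) (by omega)
      have ih2 := ih (ℓ+3) (by omega) (by omega)
      rw [show ℓ+4-2 = ℓ+2 by omega, show ℓ+4-1 = ℓ+3 by omega] at ih1
      rw [show ℓ+3-2 = ℓ+1 by omega, show ℓ+3-1 = ℓ+2 by omega] at ih2
      rw [show ℓ+5 = (ℓ+3)+2 by omega, Bh_succ, show ℓ+3+1 = ℓ+4 by omega,
        show (ℓ+3)+2-2 = ℓ+3 by omega, show (ℓ+3)+2-1 = ℓ+4 by omega]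
      have hpow1 : q^(ℓ+2) = q^(ℓ+1)*q := pow_succ q (ℓ+1)
      have hpow2 : q^(ℓ+3) = q^(ℓ+2)*q := pow_succ q (ℓ+2)
      have hpow3 : q^(ℓ+4) = q^(ℓ+3)*q := pow_succ q (ℓ+3)
      have hppos : 1 ≤ q^(ℓ+1) := Nat.one_le_iff_ne_zero.mpr (pow_ne_zero _ (by omega))
      zify [show 1 ≤ q by omega] at ih1 ih2 ⊢
      nlinarith [ih1, ih2, hq, hpow1, hpow2, hpow3, hppos]

/-- bound on the partial sums of Bh. -/
theorem sumBh_le {q : ℕ} (hq : 3 ≤ q) : ∀ d, 3 ≤ d →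
    (q-1) * (∑ ℓ ∈ Finset.Icc 1 d, Bh q ℓ) + q^(d-1) ≤ 2 * q^d + q := by
  intro d
  induction d with
  | zero => omega
  | succ d ihd =>
    intro hd
    rcases Nat.lt_or_ge d 3 with hd3 | hd3
    · -- d + 1 = 3
      have hd' : d = 2 := by omega
      subst hd'
      have hsum : ∑ ℓ ∈ Finset.Icc 1 3, Bh q ℓ = Bh q 1 + Bh q 2 + Bh q 3 := by
        rw [Finset.sum_Icc_succ_top (by omega), Finset.sum_Icc_succ_top (by omega),
          Finset.Icc_self, Finset.sum_singleton]
      have h3 : Bh q 3 = 2 + 2*(q-1) + 2*((q-1)*2) := by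
        rw [show (3:ℕ) = 1 + 2 by rfl, Bh_succ, Bh_two, Bh_one]
      rw [show (2:ℕ)+1 = 3 by rfl, hsum, Bh_one, Bh_two, h3, show (3:ℕ)-1 = 2 by rfl,
        show q^2 = q*q by ring, show q^3 = q*q*q by ring]
      obtain ⟨r, rfl⟩ : ∃ r, q = r + 3 := ⟨q - 3, by omega⟩
      simp only [show r+3-1 = r+2 by omega]
      nlinarith [Nat.zero_le r, Nat.zero_le (r*r), Nat.zero_le (r*r*r), Nat.zero_le (r*r*r*r), Nat.zero_le (r*r*r*r*r), Nat.zero_le (r*r*r*r*r*r)]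
    · have ih := ihd hd3
      have hB := Bh_refined hq (d+1) (by omega)
      rw [Finset.sum_Icc_succ_top (by omega)]
      rw [show d+1-1 = d by omega, show d+1-2 = d-1 by omega] at hB
      rw [show d+1-1 = d by omega]
      have hpow : q ^ d = q ^ (d-1) * q := by
        rw [← pow_succ, show d - 1 + 1 = d by omega]
      have hpow2 : q ^ (d+1) = q ^ d * q := pow_succ q d
      have hmul : (q-1) * (∑ ℓ ∈ Finset.Icc 1 d, Bh q ℓ + Bh q (d+1))
          = (q-1) * (∑ ℓ ∈ Finset.Icc 1 d, Bh q ℓ) + (q-1) * Bh q (d+1) := by ring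
      rw [hmul]
      zify [show 1 ≤ q by omega] at ih hB ⊢
      have hppos : (1:ℤ) ≤ (q:ℤ)^(d-1) := by
        have := pow_pos (show (0:ℤ) < (q:ℤ) by exact_mod_cast (by omega : 0 < q)) (d-1)
        omega
      nlinarith [ih, hB, hq, hpow, hpow2, hppos]

/-- bound on Bu. -/
theorem Bu_refined {q : ℕ} (hq : 3 ≤ q) : ∀ ℓ, 3 ≤ ℓ → Bu q ℓ ≤ 2*(q-1)*q^(ℓ-2) := by
  intro ℓ
  induction ℓ using Nat.strong_induction_on with
  | _ ℓ ih =>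
    intro hℓ
    match ℓ, hℓ with
    | 3, _ =>
      rw [show (3:ℕ) = 0+3 by rfl, Bu_succ, Bu_two, Bu_one, show (0:ℕ)+3-2 = 1 by rfl,
        pow_one]
      zify [show 1 ≤ q by omega]
      nlinarith [hq]
    | 4, _ =>
      rw [show (4:ℕ) = 1+3 by rfl, Bu_succ, show (1:ℕ)+2 = 0+3 by rfl, Bu_succ,
        Bu_two, Bu_one, show (1:ℕ)+3-2 = 2 by rfl, show q^2 = q*q by ring]
      zify [show 1 ≤ q by omega]
      nlinarith [hq]
    | (ℓ+5), _ =>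
      have ih1 := ih (ℓ+4) (by omega) (by omega)
      have ih2 := ih (ℓ+3) (by omega) (by omega)
      rw [show ℓ+4-2 = ℓ+2 by omega] at ih1
      rw [show ℓ+3-2 = ℓ+1 by omega] at ih2
      rw [show ℓ+5 = (ℓ+2)+3 by omega, Bu_succ, show ℓ+2+2 = ℓ+4 by omega,
        show ℓ+2+1 = ℓ+3 by omega, show (ℓ+2)+3-2 = ℓ+3 by omega]
      have hpow1 : q ^ (ℓ+2) = q ^ (ℓ+1) * q := pow_succ q (ℓ+1)
      have hpow2 : q ^ (ℓ+3) = q ^ (ℓ+2) * q := pow_succ q (ℓ+2)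
      have hppos : 1 ≤ q^(ℓ+1) := Nat.one_le_iff_ne_zero.mpr (pow_ne_zero _ (by omega))
      zify [show 1 ≤ q by omega] at ih1 ih2 ⊢
      nlinarith [ih1, ih2, hq, hpow1, hpow2, hppos]

/-- bound on the partial sums of Bu. -/
theorem sumBu_le {q : ℕ} (hq : 3 ≤ q) : ∀ d, 1 ≤ d →
    (∑ ℓ ∈ Finset.Icc 1 d, Bu q ℓ) ≤ 2 * q^(d-1) := by
  intro d
  induction d with
  | zero => omega
  | succ d ihd =>
    intro _
    rcases Nat.lt_or_ge d 1 with hd1 | hd1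
    · have : d = 0 := by omega
      subst this
      rw [show (0:ℕ)+1 = 1 by rfl, Finset.Icc_self, Finset.sum_singleton, Bu_one]
      simp
    · have ih := ihd hd1
      rw [Finset.sum_Icc_succ_top (by omega), show d+1-1 = d by omega]
      rcases Nat.lt_or_ge d 2 with hd2 | hd2
      · have : d = 1 := by omega
        subst this
        rw [Finset.Icc_self, Finset.sum_singleton, Bu_one, Bu_two, pow_one]
        omega
      · have hBu := Bu_refined hq (d+1) (by omega)
        rw [show d+1-2 = d-1 by omega] at hBu
        have hpow : q ^ d = q ^ (d-1) * q := by
          rw [← pow_succ, show d - 1 + 1 = d by omega]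
        zify [show 1 ≤ q by omega] at ih hBu ⊢
        have hppos : (1:ℤ) ≤ (q:ℤ)^(d-1) := by
          have := pow_pos (show (0:ℤ) < (q:ℤ) by exact_mod_cast (by omega : 0 < q)) (d-1)
          omega
        nlinarith [ih, hBu, hq, hpow, hppos]

/-- the sum of Bfu in terms of the shorter sum of Bu. -/
theorem sumBfu_le {q : ℕ} : ∀ d, 1 ≤ d →
    (∑ ℓ ∈ Finset.Icc 1 d, Bfu q ℓ) ≤ (q-1) * (∑ ℓ ∈ Finset.Icc 1 (d-1), Bu q ℓ) := by
  intro d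
  induction d with
  | zero => omega
  | succ d ihd =>
    intro _
    rcases Nat.lt_or_ge d 1 with hd1 | hd1
    · have : d = 0 := by omega
      subst this
      rw [show (0:ℕ)+1 = 1 by rfl, Finset.Icc_self, Finset.sum_singleton, Bfu_one]
      omega
    · have ih := ihd hd1
      rw [Finset.sum_Icc_succ_top (by omega), show d+1-1 = d by omega]
      have hstep : Bfu q (d+1) = (q-1) * Bu q d := by
        rcases d with - | d'
        · omega
        · exact Bfu_succ q d'
      have hsum : ∑ ℓ ∈ Finset.Icc 1 d, Bu q ℓ
          = ∑ ℓ ∈ Finset.Icc 1 (d-1), Bu q ℓ + Bu q d := by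
        conv_lhs => rw [show d = (d-1)+1 by omega]
        rw [Finset.sum_Icc_succ_top (by omega), show d-1+1 = d by omega]
      have hdistrib : (q-1) * (∑ ℓ ∈ Finset.Icc 1 (d-1), Bu q ℓ + Bu q d)
          = (q-1) * (∑ ℓ ∈ Finset.Icc 1 (d-1), Bu q ℓ) + (q-1) * Bu q d := by ring
      rw [hsum, hdistrib, hstep]
      omega

/-- helper polynomial inequality for the main bound, d ≥ 3. -/
theorem poly_helper {q : ℕ} (hq : 3 ≤ q) : ∀ d, 3 ≤ d →
    2*q^(d+2) + q^(d+1) + 2*(q-1)*q^(d-1) + 2*((q-1)*(q-1))*q^(d-2) + 2*q^3 + q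
      ≤ q^(d+3) := by
  intro d
  induction d with
  | zero => omega
  | succ d ihd =>
    intro hd
    rcases Nat.lt_or_ge d 3 with hd3 | hd3
    · have : d = 2 := by omega
      subst this
      show 2*q^5 + q^4 + 2*(q-1)*q^2 + 2*((q-1)*(q-1))*q^1 + 2*q^3 + q ≤ q^6
      rw [show q^2 = q*q by ring, show q^3 = q*q*q by ring, show q^4 = q*q*q*q by ring,
        show q^5 = q*q*q*q*q by ring, show q^6 = q*q*q*q*q*q by ring, pow_one]
      obtain ⟨r, rfl⟩ : ∃ r, q = r + 3 := ⟨q - 3, by omega⟩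
      simp only [show r+3-1 = r+2 by omega]
      nlinarith [Nat.zero_le r, Nat.zero_le (r*r), Nat.zero_le (r*r*r), Nat.zero_le (r*r*r*r), Nat.zero_le (r*r*r*r*r), Nat.zero_le (r*r*r*r*r*r)]
    · have ih := ihd hd3
      have key : 2*q^(d+1+2) + q^(d+1+1) + 2*(q-1)*q^(d+1-1) + 2*((q-1)*(q-1))*q^(d+1-2)
          + 2*q^3 + q
          ≤ (2*q^(d+2) + q^(d+1) + 2*(q-1)*q^(d-1) + 2*((q-1)*(q-1))*q^(d-2) + 2*q^3 + q) * q := by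
        have e1 : q^(d+1+2) = q^(d+2) * q := pow_succ q (d+2)
        have e2 : q^(d+1+1) = q^(d+1) * q := pow_succ q (d+1)
        have e3 : q^(d+1-1) = q^(d-1) * q := by
          rw [← pow_succ, show d-1+1 = d+1-1 by omega]
        have e4 : q^(d+1-2) = q^(d-2) * q := by
          rw [← pow_succ, show d-2+1 = d+1-2 by omega]
        rw [e1, e2, e3, e4]
        zify [show 1 ≤ q by omega]
        nlinarith [hq]
      calc 2*q^(d+1+2) + q^(d+1+1) + 2*(q-1)*q^(d+1-1) + 2*((q-1)*(q-1))*q^(d+1-2)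
            + 2*q^3 + q
          ≤ (2*q^(d+2) + q^(d+1) + 2*(q-1)*q^(d-1) + 2*((q-1)*(q-1))*q^(d-2) + 2*q^3 + q) * q :=
            key
        _ ≤ q^(d+3) * q := Nat.mul_le_mul_right q ih
        _ = q^(d+1+3) := by rw [← pow_succ, show d+3+1 = d+1+3 by omega]

set_option maxHeartbeats 2000000 in
/-- The main counting inequality. -/
theorem numeric_main {q g : ℕ} (hq : 3 ≤ q) (hg : 3 ≤ g) :
    q * (q * (∑ ℓ ∈ Finset.Icc 1 (g-2), Bu q ℓ)
      + (q-1) * (q * (1 + ∑ ℓ ∈ Finset.Icc 1 (g-2), Bh q ℓ)))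
      + (q - 1) * (1 + ∑ ℓ ∈ Finset.Icc 1 (g-2), (Bu q ℓ + Bfu q ℓ))
      < q ^ (g + 1) := by
  have hd1 : 1 ≤ g - 2 := by omega
  have hgd : g + 1 = (g - 2) + 3 := by omega
  rw [hgd]
  set d := g - 2 with hd
  rcases Nat.lt_or_ge d 2 with hd2 | hd2
  · -- d = 1, g = 3
    rw [show d = 1 by omega]
    rw [Finset.Icc_self, Finset.sum_singleton, Finset.sum_singleton, Finset.sum_singleton,
      Bu_one, Bh_one, Bfu_one]
    rw [show q^(1+3) = q*q*q*q by ring]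
    obtain ⟨r, rfl⟩ : ∃ r, q = r + 3 := ⟨q - 3, by omega⟩
    simp only [show r+3-1 = r+2 by omega]
    nlinarith [Nat.zero_le r, Nat.zero_le (r*r), Nat.zero_le (r*r*r), Nat.zero_le (r*r*r*r), Nat.zero_le (r*r*r*r*r), Nat.zero_le (r*r*r*r*r*r)]
  rcases Nat.lt_or_ge d 3 with hd3 | hd3
  · -- d = 2, g = 4
    rw [show d = 2 by omega]
    have hsum : ∀ f : ℕ → ℕ, (∑ ℓ ∈ Finset.Icc 1 2, f ℓ) = f 1 + f 2 := by
      intro f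
      rw [Finset.sum_Icc_succ_top (by omega), Finset.Icc_self, Finset.sum_singleton]
    rw [hsum, hsum, hsum, Bu_one, Bu_two, Bh_one, Bh_two, Bfu_one,
      show Bfu q 2 = (q-1) * Bu q 1 from Bfu_succ q 0, Bu_one]
    rw [show q^(2+3) = q*q*q*q*q by ring]
    obtain ⟨r, rfl⟩ : ∃ r, q = r + 3 := ⟨q - 3, by omega⟩
    simp only [show r+3-1 = r+2 by omega]
    nlinarith [Nat.zero_le r, Nat.zero_le (r*r), Nat.zero_le (r*r*r), Nat.zero_le (r*r*r*r), Nat.zero_le (r*r*r*r*r), Nat.zero_le (r*r*r*r*r*r)]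
  · -- d ≥ 3
    set W := ∑ ℓ ∈ Finset.Icc 1 d, Bh q ℓ with hW
    set EU := ∑ ℓ ∈ Finset.Icc 1 d, Bu q ℓ with hEU
    set EU' := ∑ ℓ ∈ Finset.Icc 1 (d-1), Bu q ℓ with hEU'
    set S := ∑ ℓ ∈ Finset.Icc 1 d, Bfu q ℓ with hS
    have hsplit : (∑ ℓ ∈ Finset.Icc 1 d, (Bu q ℓ + Bfu q ℓ)) = EU + S := by
      rw [hEU, hS, ← Finset.sum_add_distrib]
    have hC := sumBh_le hq d hd3
    have hE := sumBu_le hq d (by omega)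
    have hE' := sumBu_le hq (d-1) (by omega)
    have hF := sumBfu_le (q := q) d (by omega)
    rw [← hW] at hC
    rw [← hEU] at hE
    rw [← hS, ← hEU'] at hF
    rw [← hEU'] at hE'
    rw [show d-1-1 = d-2 by omega] at hE'
    rw [hsplit]
    -- powers
    have hp1 : q ^ d = q ^ (d-1) * q := by rw [← pow_succ, show d - 1 + 1 = d by omega]
    have hp0 : q ^ (d-1) = q ^ (d-2) * q := by
      rw [← pow_succ, show d - 2 + 1 = d - 1 by omega]
    have hp2 : q ^ (d+1) = q ^ d * q := pow_succ q d
    have hp3 : q ^ (d+2) = q ^ (d+1) * q := pow_succ q (d+1)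
    have hp4 : q ^ (d+3) = q ^ (d+2) * q := pow_succ q (d+2)
    have hpoly := poly_helper hq d hd3
    zify [show 1 ≤ q by omega] at hC hE hE' hF hpoly ⊢
    have hq' : (3:ℤ) ≤ (q:ℤ) := by exact_mod_cast hq
    have hWpos : (0:ℤ) ≤ (W:ℤ) := Int.natCast_nonneg W
    have hEUpos : (0:ℤ) ≤ (EU:ℤ) := Int.natCast_nonneg EU
    have hSpos : (0:ℤ) ≤ (S:ℤ) := Int.natCast_nonneg S
    have hp1' : ((q:ℤ)) ^ d = (q:ℤ) ^ (d-1) * q := by exact_mod_cast hp1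
    have hp0' : ((q:ℤ)) ^ (d-1) = (q:ℤ) ^ (d-2) * q := by exact_mod_cast hp0
    have hp2' : ((q:ℤ)) ^ (d+1) = (q:ℤ) ^ d * q := by exact_mod_cast hp2
    have hp3' : ((q:ℤ)) ^ (d+2) = (q:ℤ) ^ (d+1) * q := by exact_mod_cast hp3
    have hp4' : ((q:ℤ)) ^ (d+3) = (q:ℤ) ^ (d+2) * q := by exact_mod_cast hp4
    -- assemble
    have b2 : (q:ℤ)*q*(((q:ℤ)-1)*W) + (q:ℤ)^(d+1) ≤ 2*(q:ℤ)^(d+2) + q*q*q := by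
      have := mul_le_mul_of_nonneg_left hC (by positivity : (0:ℤ) ≤ (q:ℤ)*(q:ℤ))
      nlinarith [this, hp1', hp2', hp3']
    have b1 : (q:ℤ)*q*EU ≤ 2*(q:ℤ)^(d+1) := by
      have := mul_le_mul_of_nonneg_left hE (by positivity : (0:ℤ) ≤ (q:ℤ)*(q:ℤ))
      nlinarith [this, hp1', hp2']
    have b4 : ((q:ℤ)-1)*S ≤ 2*(((q:ℤ)-1)*((q:ℤ)-1))*(q:ℤ)^(d-2) := by
      have h1 : ((q:ℤ)-1)*S ≤ ((q:ℤ)-1)*(((q:ℤ)-1)*EU') := by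
        apply mul_le_mul_of_nonneg_left hF (by nlinarith [hq'])
      have h2 : ((q:ℤ)-1)*(((q:ℤ)-1)*EU') ≤ ((q:ℤ)-1)*(((q:ℤ)-1)*(2*(q:ℤ)^(d-2))) := by
        apply mul_le_mul_of_nonneg_left _ (by nlinarith [hq'])
        apply mul_le_mul_of_nonneg_left hE' (by nlinarith [hq'])
      nlinarith [h1, h2]
    have b3 : ((q:ℤ)-1)*EU ≤ 2*((q:ℤ)-1)*(q:ℤ)^(d-1) := by
      have := mul_le_mul_of_nonneg_left hE (by nlinarith [hq'] : (0:ℤ) ≤ (q:ℤ)-1)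
      nlinarith [this]
    have hq3pos : (0:ℤ) ≤ (q:ℤ)^(d-2) := by positivity
    have hq1pos : (0:ℤ) ≤ (q:ℤ)^(d+1) := by positivity
    nlinarith [b1, b2, b3, b4, hpoly, hq', hq3pos, hq1pos]

end Arith

end Stmt13

/-- Augmentation step (key lemma of Theorem 2): if A is a set of q-hyperedges on
the cycle H on n = q^{g+1} vertices (q ≥ 3, g ≥ 3) such that no vertex lies in
more than one hyperedge and (V, E₀ ∪ A) has girth at least g, and |A| < q^g,
then there is a set A⁺ of q-hyperedges with |A⁺| = |A| + 1 satisfying the same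
two conditions. -/
theorem stmt13 (q g : ℕ) (hq : 3 ≤ q) (hg : 3 ≤ g)
    (A : Finset (Finset (Fin (q ^ (g + 1)))))
    (hcard : ∀ e ∈ A, e.card = q)
    (hmatch : ∀ e ∈ A, ∀ f ∈ A, e ≠ f → Disjoint e f)
    (hgirth : ∀ (L : ℕ) (w : ZMod L → Fin (q ^ (g + 1))) (t : ZMod L → Bool),
      IsCycleWalk A L w t → g ≤ L)
    (hA : A.card < q ^ g) :
    ∃ A' : Finset (Finset (Fin (q ^ (g + 1)))),
      A'.card = A.card + 1
      ∧ (∀ e ∈ A', e.card = q)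
      ∧ (∀ e ∈ A', ∀ f ∈ A', e ≠ f → Disjoint e f)
      ∧ (∀ (L : ℕ) (w : ZMod L → Fin (q ^ (g + 1))) (t : ZMod L → Bool),
          IsCycleWalk A' L w t → g ≤ L) := by
  classical
  open Stmt13 in
  have hn : 2 ≤ q ^ (g + 1) := by
    calc 2 ≤ q := by omega
      _ ≤ q ^ (g + 1) := Nat.le_self_pow (by omega) q
  set d := g - 2 with hd
  obtain ⟨S, hSsub, hSfar, hScov⟩ := Stmt13.exists_max_far (A := A) d
  have hUncovMem : ∀ x, x ∈ Stmt13.Uncov A ↔ ¬ ∃ e ∈ A, x ∈ e := by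
    intro x
    simp [Stmt13.Uncov]
  by_cases hbig : q ≤ S.card
  · -- Case 1: add a new hyperedge on q pairwise-far uncovered vertices
    obtain ⟨S', hS'sub, hS'card⟩ := Finset.exists_subset_card_eq hbig
    have hS'unc : ∀ x ∈ S', ¬ ∃ e ∈ A, x ∈ e := by
      intro x hx
      exact (hUncovMem x).mp (hSsub (hS'sub hx))
    have hS'notA : S' ∉ A := by
      intro hmem
      have : S'.Nonempty := by rw [← Finset.card_pos, hS'card]; omega
      obtain ⟨x, hx⟩ := this
      exact hS'unc x hx ⟨S', hmem, hx⟩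
    refine ⟨(A \ ∅) ∪ {S'}, ?_, ?_, ?_, ?_⟩
    · rw [Finset.sdiff_empty]
      rw [Finset.union_comm, ← Finset.insert_eq]
      rw [Finset.card_insert_of_notMem hS'notA]
    · intro e he
      rw [Finset.sdiff_empty, Finset.mem_union, Finset.mem_singleton] at he
      rcases he with he | rfl
      · exact hcard e he
      · exact hS'card
    · intro e he f hf hef
      rw [Finset.sdiff_empty, Finset.mem_union, Finset.mem_singleton] at he hf
      rcases he with he | rfl
      · rcases hf with hf | rfl
        · exact hmatch e he f hf hef
        · rw [Finset.disjoint_right]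
          intro a haf hae
          exact hS'unc a haf ⟨e, he, hae⟩
      · rcases hf with hf | rfl
        · rw [Finset.disjoint_left]
          intro a hae haf
          exact hS'unc a hae ⟨f, hf, haf⟩
        · exact absurd rfl hef
    · refine Stmt13.girth_of_modified (soft := ∅) hn hg (Finset.empty_subset A)
        hmatch hgirth ?_ ?_
      · intro x y hx hy hxy hsoft
        left
        obtain ⟨E, hE, hxE⟩ := hx
        obtain ⟨E', hE', hyE⟩ := hy
        rw [Finset.mem_singleton] at hE hE'
        subst hE
        subst hE'
        exact hSfar x (hS'sub hxE) y (hS'sub hyE) hxy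
      · intro E hE x hxE y hyE hxs hys
        simp at hxs
  · -- Case 2: swap construction
    push_neg at hbig
    set W := ∑ ℓ ∈ Finset.Icc 1 d, Bh q ℓ with hW
    set EU := ∑ ℓ ∈ Finset.Icc 1 d, Bu q ℓ with hEU
    set VU := 1 + ∑ ℓ ∈ Finset.Icc 1 d, (Bu q ℓ + Bfu q ℓ) with hVU
    have hcovle : q * A.card ≤ q ^ (g + 1) := by
      have hcov : (A.biUnion (fun e => e)).card = q * A.card := by
        rw [Finset.card_biUnion (fun e he f hf hef => hmatch e he f hf hef)]
        rw [show (∑ e ∈ A, e.card) = ∑ _e ∈ A, q from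
          Finset.sum_congr rfl (fun e he => hcard e he), Finset.sum_const, smul_eq_mul, mul_comm]
      calc q * A.card = (A.biUnion (fun e => e)).card := hcov.symm
        _ ≤ (Finset.univ : Finset (Fin (q ^ (g + 1)))).card :=
            Finset.card_le_card (Finset.subset_univ _)
        _ = q ^ (g + 1) := by rw [Finset.card_univ, Fintype.card_fin]
    have hU : (Stmt13.Uncov A).card = q ^ (g + 1) - q * A.card :=
      Stmt13.card_Uncov hcard hmatch
    have hUge : q ≤ (Stmt13.Uncov A).card := by
      have h1 : q * (A.card + 1) ≤ q * q ^ g := by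
        apply Nat.mul_le_mul_left
        omega
      have h2 : q * q ^ g = q ^ (g + 1) := by
        rw [pow_succ, mul_comm]
      have h3 : q * (A.card + 1) = q * A.card + q := by ring
      omega
    have hUcov : Stmt13.Uncov A ⊆ S.biUnion (Stmt13.Ball A d) := by
      intro x hx
      obtain ⟨s, hs, hr⟩ := hScov x hx
      exact Finset.mem_biUnion.mpr ⟨s, hs, Finset.mem_filter.mpr ⟨Finset.mem_univ _, hr⟩⟩
    have hUle : (Stmt13.Uncov A).card ≤ (q - 1) * VU := by
      calc (Stmt13.Uncov A).card ≤ (S.biUnion (Stmt13.Ball A d)).card :=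
            Finset.card_le_card hUcov
        _ ≤ ∑ s ∈ S, (Stmt13.Ball A d s).card := Finset.card_biUnion_le
        _ ≤ S.card * VU := by
            rw [← smul_eq_mul]
            apply Finset.sum_le_card_nsmul
            intro s hs
            exact Stmt13.ball_card_le_uncov hn hcard hmatch d s ((hUncovMem s).mp (hSsub hs))
        _ ≤ (q - 1) * VU := by
            apply Nat.mul_le_mul_right
            omega
    obtain ⟨us, hus_sub, hus_card⟩ := Finset.exists_subset_card_eq hUge
    have hmlb := Stmt13.numeric_main (q := q) (g := g) hq hg
    rw [← hd, ← hW, ← hEU, ← hVU] at hmlb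
    have hcount : ∀ FS : Finset (Finset (Fin (q ^ (g + 1)))), FS ⊆ A → FS.card < q →
        (((us.biUnion (Stmt13.NearEdges A d)) ∪
          (FS.biUnion (fun f => f.biUnion (Stmt13.NearEdges A d)))).card < A.card) := by
      intro FS hsub hcardFS
      have h1 : (us.biUnion (Stmt13.NearEdges A d)).card ≤ q * EU := by
        calc (us.biUnion (Stmt13.NearEdges A d)).card
            ≤ ∑ u ∈ us, (Stmt13.NearEdges A d u).card := Finset.card_biUnion_le
          _ ≤ us.card * EU := by
              rw [← smul_eq_mul]
              apply Finset.sum_le_card_nsmul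
              intro x hx
              exact Stmt13.nearEdges_card_le_uncov hn hcard hmatch d x
                ((hUncovMem x).mp (hus_sub hx))
          _ = q * EU := by rw [hus_card]
      have h2 : (FS.biUnion (fun f => f.biUnion (Stmt13.NearEdges A d))).card
          ≤ (q - 1) * (q * (1 + W)) := by
        calc (FS.biUnion (fun f => f.biUnion (Stmt13.NearEdges A d))).card
            ≤ ∑ f ∈ FS, (f.biUnion (Stmt13.NearEdges A d)).card := Finset.card_biUnion_le
          _ ≤ FS.card * (q * (1 + W)) := by
              rw [← smul_eq_mul]
              apply Finset.sum_le_card_nsmul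
              intro f hf
              calc (f.biUnion (Stmt13.NearEdges A d)).card
                  ≤ ∑ x ∈ f, (Stmt13.NearEdges A d x).card := Finset.card_biUnion_le
                _ ≤ f.card * (1 + W) := by
                    rw [← smul_eq_mul]
                    apply Finset.sum_le_card_nsmul
                    intro x hx
                    exact Stmt13.nearEdges_card_le_cov hn hcard hmatch d x
                _ = q * (1 + W) := by rw [hcard f (hsub hf)]
          _ ≤ (q - 1) * (q * (1 + W)) := by
              apply Nat.mul_le_mul_right
              omega
      have h3 := Finset.card_union_le (us.biUnion (Stmt13.NearEdges A d))
        (FS.biUnion (fun f => f.biUnion (Stmt13.NearEdges A d)))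
      by_contra hge
      push_neg at hge
      have hc1 : q * A.card ≤ q * (q * EU + (q - 1) * (q * (1 + W))) := by
        apply Nat.mul_le_mul_left
        omega
      set X := q * (q * EU + (q - 1) * (q * (1 + W))) with hX
      set Y := (q - 1) * VU with hY
      set M := q * A.card with hM
      omega
    obtain ⟨FS, hFSsub, hFScard, hP1, hP2⟩ :=
      Stmt13.greedy_edges hcard (by omega) d us q hcount
    -- pair up the chosen edges and uncovered vertices
    set f : Fin q → Finset (Fin (q ^ (g + 1))) :=
      fun i => (FS.equivFin.symm (Fin.cast hFScard.symm i) : { x // x ∈ FS }).val with hfdef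
    set u : Fin q → Fin (q ^ (g + 1)) :=
      fun i => (us.equivFin.symm (Fin.cast hus_card.symm i) : { x // x ∈ us }).val with hudef
    have hfmem : ∀ i, f i ∈ FS := fun i => (FS.equivFin.symm (Fin.cast hFScard.symm i)).2
    have hfinj : Function.Injective f := by
      intro i j h
      have h2 := FS.equivFin.symm.injective (Subtype.ext h)
      have h3 : (Fin.cast hFScard.symm i).val = (Fin.cast hFScard.symm j).val := by rw [h2]
      exact Fin.ext h3
    have humem : ∀ i, u i ∈ us := fun i => (us.equivFin.symm (Fin.cast hus_card.symm i)).2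
    have huinj : Function.Injective u := by
      intro i j h
      have h2 := us.equivFin.symm.injective (Subtype.ext h)
      have h3 : (Fin.cast hus_card.symm i).val = (Fin.cast hus_card.symm j).val := by rw [h2]
      exact Fin.ext h3
    have hfA : ∀ i, f i ∈ A := fun i => hFSsub (hfmem i)
    have hfq : ∀ i, (f i).card = q := fun i => hcard _ (hfA i)
    have hfne : ∀ i, (f i).Nonempty := by
      intro i
      rw [← Finset.card_pos, hfq i]
      omega
    set v : Fin q → Fin (q ^ (g + 1)) := fun i => (hfne i).choose with hvdef
    have hvf : ∀ i, v i ∈ f i := fun i => (hfne i).choose_spec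
    have hfdisj : ∀ i j, i ≠ j → Disjoint (f i) (f j) := fun i j hij =>
      hmatch _ (hfA i) _ (hfA j) (fun h => hij (hfinj h))
    have huNotInEdge : ∀ i, ∀ e ∈ A, u i ∉ e := fun i e he hmem =>
      (hUncovMem (u i)).mp (hus_sub (humem i)) ⟨e, he, hmem⟩
    have huf : ∀ i j, u i ∉ f j := fun i j => huNotInEdge i _ (hfA j)
    have huv : ∀ i j, u i ≠ v j := fun i j h => huf i j (h ▸ hvf j)
    have hvinj : Function.Injective v := by
      intro i j h
      by_contra hij
      exact Finset.disjoint_left.mp (hfdisj i j hij) (hvf i) (h ▸ hvf j)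
    have hfarUF : ∀ i j, ∀ y ∈ f j, ¬ReachC A d (u i) y := fun i j =>
      hP1 (f j) (hfmem j) (u i) (humem i)
    have hfarFF : ∀ i j, i ≠ j → ∀ x ∈ f i, ∀ y ∈ f j, ¬ReachC A d x y := fun i j hij =>
      hP2 _ (hfmem i) _ (hfmem j) (fun h => hij (hfinj h))
    -- the new hyperedges
    set newE : Fin q → Finset (Fin (q ^ (g + 1))) :=
      fun i => insert (u i) ((f i).erase (v i)) with hnewE
    set estar : Finset (Fin (q ^ (g + 1))) := Finset.image v Finset.univ with hestar
    set NewS : Finset (Finset (Fin (q ^ (g + 1)))) :=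
      insert estar (Finset.image newE Finset.univ) with hNewS
    set soft : Finset (Fin (q ^ (g + 1))) := Finset.image u Finset.univ with hsoftdef
    have i0 : Fin q := ⟨0, by omega⟩
    have hmem_newE : ∀ i x, x ∈ newE i ↔ (x = u i ∨ (x ∈ f i ∧ x ≠ v i)) := by
      intro i x
      rw [hnewE]
      simp only [Finset.mem_insert, Finset.mem_erase]
      tauto
    have hmem_estar : ∀ x, x ∈ estar ↔ ∃ i, v i = x := by
      intro x
      rw [hestar]
      simp
    have hnewEinj : Function.Injective newE := by
      intro i j h
      have hui : u i ∈ newE j := by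
        rw [← h, hmem_newE]
        left
        rfl
      rw [hmem_newE] at hui
      rcases hui with hui | ⟨hui, -⟩
      · exact huinj hui
      · exact absurd hui (huf i j)
    have hestar_ne : ∀ i, estar ≠ newE i := by
      intro i h
      have : u i ∈ estar := by
        rw [h, hmem_newE]
        left
        rfl
      rw [hmem_estar] at this
      obtain ⟨j, hj⟩ := this
      exact huv i j hj.symm
    -- pieces of the matching property
    have hdisj_old_estar : ∀ e ∈ A \ FS, Disjoint e estar := by
      intro e he
      obtain ⟨heA, heF⟩ := Finset.mem_sdiff.mp he
      rw [Finset.disjoint_right]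
      intro x hx hxe
      obtain ⟨i, hi⟩ := (hmem_estar x).mp hx
      have : e = f i := Stmt13.edge_unique hmatch heA (hfA i) hxe (hi ▸ hvf i)
      exact heF (this ▸ hfmem i)
    have hdisj_old_new : ∀ e ∈ A \ FS, ∀ i, Disjoint e (newE i) := by
      intro e he i
      obtain ⟨heA, heF⟩ := Finset.mem_sdiff.mp he
      rw [Finset.disjoint_right]
      intro x hx hxe
      rcases (hmem_newE i x).mp hx with rfl | ⟨hxf, -⟩
      · exact huNotInEdge i e heA hxe
      · have : e = f i := Stmt13.edge_unique hmatch heA (hfA i) hxe hxf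
        exact heF (this ▸ hfmem i)
    have hdisj_estar_new : ∀ i, Disjoint estar (newE i) := by
      intro i
      rw [Finset.disjoint_left]
      intro x hx hx'
      obtain ⟨j, hj⟩ := (hmem_estar x).mp hx
      rcases (hmem_newE i x).mp hx' with rfl | ⟨hxf, hxv⟩
      · exact huv i j hj.symm
      · by_cases hij : j = i
        · exact hxv (by rw [← hj, hij])
        · exact Finset.disjoint_left.mp (hfdisj j i hij) (hj ▸ hvf j) hxf
    have hdisj_new_new : ∀ i j, i ≠ j → Disjoint (newE i) (newE j) := by
      intro i j hij
      rw [Finset.disjoint_left]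
      intro x hx hx'
      rcases (hmem_newE i x).mp hx with rfl | ⟨hxf, -⟩
      · rcases (hmem_newE j _).mp hx' with huu | ⟨hxf', -⟩
        · exact hij (huinj huu)
        · exact huf i j hxf'
      · rcases (hmem_newE j x).mp hx' with rfl | ⟨hxf', -⟩
        · exact huf j i hxf
        · exact Finset.disjoint_left.mp (hfdisj i j hij) hxf hxf'
    have hNnotold : ∀ E ∈ NewS, E ∉ A \ FS := by
      intro E hE hEold
      rcases Finset.mem_insert.mp hE with rfl | hEimg
      · have hv0 : v i0 ∈ estar := (hmem_estar _).mpr ⟨i0, rfl⟩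
        exact Finset.disjoint_left.mp (hdisj_old_estar estar hEold) hv0 hv0 |>.elim
      · obtain ⟨i, -, rfl⟩ := Finset.mem_image.mp hEimg
        have hu0 : u i ∈ newE i := (hmem_newE i _).mpr (Or.inl rfl)
        exact Finset.disjoint_left.mp (hdisj_old_new _ hEold i) hu0 hu0 |>.elim
    refine ⟨(A \ FS) ∪ NewS, ?_, ?_, ?_, ?_⟩
    · -- cardinality
      have hdisjUN : Disjoint (A \ FS) NewS :=
        Finset.disjoint_right.mpr (fun E hE => hNnotold E hE)
      have hcardNew : NewS.card = q + 1 := by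
        rw [hNewS, Finset.card_insert_of_notMem, Finset.card_image_of_injective _ hnewEinj,
          Finset.card_univ, Fintype.card_fin]
        intro hmem
        obtain ⟨i, -, hi⟩ := Finset.mem_image.mp hmem
        exact hestar_ne i hi.symm
      have hqle : q ≤ A.card := by
        calc q = FS.card := hFScard.symm
          _ ≤ A.card := Finset.card_le_card hFSsub
      rw [Finset.card_union_of_disjoint hdisjUN, Finset.card_sdiff_of_subset hFSsub, hFScard, hcardNew]
      omega
    · -- edge cardinalities
      intro e he
      rcases Finset.mem_union.mp he with he | he
      · exact hcard e (Finset.mem_sdiff.mp he).1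
      · rcases Finset.mem_insert.mp he with rfl | heimg
        · rw [hestar, Finset.card_image_of_injective _ hvinj, Finset.card_univ,
            Fintype.card_fin]
        · obtain ⟨i, -, rfl⟩ := Finset.mem_image.mp heimg
          rw [hnewE]
          have h1 : u i ∉ (f i).erase (v i) := fun h => huf i i (Finset.mem_of_mem_erase h)
          rw [Finset.card_insert_of_notMem h1, Finset.card_erase_of_mem (hvf i), hfq i]
          omega
    · -- matching
      intro e he e' he' hne'
      rcases Finset.mem_union.mp he with he | he <;>
        rcases Finset.mem_union.mp he' with he' | he'
      · exact hmatch e (Finset.mem_sdiff.mp he).1 e' (Finset.mem_sdiff.mp he').1 hne'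
      · rcases Finset.mem_insert.mp he' with rfl | heimg
        · exact hdisj_old_estar e he
        · obtain ⟨i, -, rfl⟩ := Finset.mem_image.mp heimg
          exact hdisj_old_new e he i
      · rcases Finset.mem_insert.mp he with rfl | heimg
        · exact (hdisj_old_estar e' he').symm
        · obtain ⟨i, -, rfl⟩ := Finset.mem_image.mp heimg
          exact (hdisj_old_new e' he' i).symm
      · rcases Finset.mem_insert.mp he with rfl | heimg
        · rcases Finset.mem_insert.mp he' with rfl | heimg'
          · exact absurd rfl hne'
          · obtain ⟨i, -, rfl⟩ := Finset.mem_image.mp heimg'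
            exact hdisj_estar_new i
        · obtain ⟨i, -, rfl⟩ := Finset.mem_image.mp heimg
          rcases Finset.mem_insert.mp he' with rfl | heimg'
          · exact (hdisj_estar_new i).symm
          · obtain ⟨j, -, rfl⟩ := Finset.mem_image.mp heimg'
            exact hdisj_new_new i j (fun h => hne' (by rw [h]))
    · -- girth
      apply Stmt13.girth_of_modified (soft := soft) hn hg hFSsub hmatch hgirth
      · -- far / common edge condition
        intro x y hx hy hxy hnsoft
        have hclass : ∀ z, (∃ E ∈ NewS, z ∈ E) → (∃ i, z = u i) ∨ (∃ i, z ∈ f i) := by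
          intro z hz
          obtain ⟨E, hE, hzE⟩ := hz
          rcases Finset.mem_insert.mp hE with rfl | hEimg
          · obtain ⟨i, hi⟩ := (hmem_estar z).mp hzE
            exact Or.inr ⟨i, hi ▸ hvf i⟩
          · obtain ⟨i, -, rfl⟩ := Finset.mem_image.mp hEimg
            rcases (hmem_newE i z).mp hzE with rfl | ⟨hzf, -⟩
            · exact Or.inl ⟨i, rfl⟩
            · exact Or.inr ⟨i, hzf⟩
        have husoft : ∀ i, u i ∈ soft := by
          intro i
          rw [hsoftdef]
          exact Finset.mem_image.mpr ⟨i, Finset.mem_univ _, rfl⟩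
        rcases hclass x hx with ⟨i, rfl⟩ | ⟨i, hxf⟩
        · rcases hclass y hy with ⟨j, rfl⟩ | ⟨j, hyf⟩
          · exact absurd ⟨husoft i, husoft j⟩ hnsoft
          · exact Or.inl (hfarUF i j y hyf)
        · rcases hclass y hy with ⟨j, rfl⟩ | ⟨j, hyf⟩
          · exact Or.inl (fun hr => hfarUF j i x hxf (Stmt13.reachC_symm hr))
          · by_cases hij : i = j
            · exact Or.inr ⟨f i, hfmem i, hxf, hij ▸ hyf⟩
            · exact Or.inl (hfarFF i j hij x hxf y hyf)
      · -- at most one soft vertex per new edge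
        intro E hE x hxE y hyE hxs hys
        obtain ⟨kx, -, hkx⟩ := Finset.mem_image.mp hxs
        obtain ⟨ky, -, hky⟩ := Finset.mem_image.mp hys
        rcases Finset.mem_insert.mp hE with rfl | hEimg
        · obtain ⟨j, hj⟩ := (hmem_estar x).mp hxE
          exact absurd (hkx.trans hj.symm) (huv kx j)
        · obtain ⟨i, -, rfl⟩ := Finset.mem_image.mp hEimg
          have hx' : x = u i := by
            rcases (hmem_newE i x).mp hxE with h | ⟨hxf, -⟩
            · exact h
            · exact absurd (hkx ▸ hxf) (huf kx i)
          have hy' : y = u i := by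
            rcases (hmem_newE i y).mp hyE with h | ⟨hyf, -⟩
            · exact h
            · exact absurd (hky ▸ hyf) (huf ky i)
          rw [hx', hy']
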